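/- arXiv:2305.02545 — 8 statements merged into one kernel-verified Lean document; each statement's English description precedes it below -/
import Mathlib

section
/- Let G be an α_i-metric graph, and let u,v,x,y be vertices such that x lies on a shortest path between u and v, d(u,x)=d(u,y), and d(v,y) ≤ d(v,x)+k for a nonnegative integer k. Then d(x,y) ≤ k+i+2. -/
open SimpleGraph

variable {V : Type*}

/-- `Itv G u v x` means `x` lies on a shortest `(u,v)`-path, i.e. `x ∈ I(u,v)`. -/
def Itv (G : SimpleGraph V) (u v x : V) : Prop :=
  G.dist u x + G.dist x v = G.dist u v

/-- `G` is an `α_i`-metric graph. -/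
def AlphaI (G : SimpleGraph V) (i : ℕ) : Prop :=
  ∀ u v w x : V, Itv G u w v → Itv G v x w → G.Adj v w →
    G.dist u v + G.dist v x ≤ G.dist u x + i

/-- Eccentricity of a vertex. -/
noncomputable def ecc (G : SimpleGraph V) [Fintype V] (v : V) : ℕ :=
  Finset.univ.sup (fun u => G.dist v u)

/-- Radius of the graph. -/
noncomputable def grad (G : SimpleGraph V) [Fintype V] [Nonempty V] : ℕ :=
  Finset.univ.inf' Finset.univ_nonempty (fun v => ecc G v)

/-- Diameter of the graph. -/
noncomputable def gdiam (G : SimpleGraph V) [Fintype V] : ℕ :=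
  Finset.univ.sup (fun v => ecc G v)

/-- In a connected graph, from any vertex at positive distance from `b` there is a
neighbor strictly closer to `b`. -/
private lemma step_toward {G : SimpleGraph V} (hG : G.Connected) {a b : V}
    (h : G.dist a b ≠ 0) : ∃ z : V, G.Adj a z ∧ G.dist z b + 1 = G.dist a b := by
  obtain ⟨p, hp⟩ := hG.exists_walk_length_eq_dist a b
  cases p with
  | nil => simp at hp; simp [SimpleGraph.dist_self] at h
  | @cons _ z _ hadj q =>
    refine ⟨z, hadj, ?_⟩
    have h1 : G.dist z b ≤ q.length := SimpleGraph.dist_le q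
    have h2 : G.dist a b ≤ G.dist a z + G.dist z b := hG.dist_triangle
    have h3 : G.dist a z = 1 := SimpleGraph.dist_eq_one_iff_adj.mpr hadj
    simp only [SimpleGraph.Walk.length_cons] at hp
    omega

/-- Key lemma, proved by lexicographic induction on `(K, B)` where `B = d(v,x)` and
`K = d(v,y) - d(v,x)`. -/
private lemma key {G : SimpleGraph V} (hG : G.Connected) {i : ℕ} (hα : AlphaI G i) :
    ∀ K B : ℕ, ∀ u v x y : V, Itv G u v x → G.dist u x = G.dist u y →
      G.dist v x = B → G.dist v y = B + K → G.dist x y ≤ K + i + 2 := by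
  intro K
  induction K using Nat.strong_induction_on with
  | _ K IHK =>
  intro B
  induction B using Nat.strong_induction_on with
  | _ B IHB =>
  intro u v x y hx hxy hB hK
  -- basic distance facts
  have exv : G.dist x v = B := by rw [G.dist_comm]; exact hB
  have eyv : G.dist y v = B + K := by rw [G.dist_comm]; exact hK
  have hxItv : G.dist u x + G.dist x v = G.dist u v := hx
  by_cases hB0 : B = 0
  · have t : G.dist x y ≤ G.dist x v + G.dist v y := hG.dist_triangle
    omega
  by_cases hc0 : G.dist x y = 0
  · omega
  -- pick z : neighbor of y towards v
  have hyv0 : G.dist y v ≠ 0 := by omega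
  obtain ⟨z, hyz, hzv⟩ := step_toward hG hyv0
  have dyz : G.dist y z = 1 := SimpleGraph.dist_eq_one_iff_adj.mpr hyz
  have dzy : G.dist z y = 1 := by rw [G.dist_comm]; exact dyz
  have duy : G.dist u y = G.dist u x := hxy.symm
  -- bounds on d(u,z)
  have tuz : G.dist u z ≤ G.dist u y + G.dist y z := hG.dist_triangle
  have tuy : G.dist u y ≤ G.dist u z + G.dist z y := hG.dist_triangle
  have tuvz : G.dist u v ≤ G.dist u z + G.dist z v := hG.dist_triangle
  have trich : G.dist u z = G.dist u x ∨ G.dist u z + 1 = G.dist u x ∨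
      G.dist u z = G.dist u x + 1 := by omega
  rcases trich with h0 | h0 | h0
  · -- d(u,z) = d(u,x) : use IH with K-1
    have hK1 : 1 ≤ K := by omega
    have hvz : G.dist v z = B + (K - 1) := by rw [G.dist_comm]; omega
    have ih := IHK (K - 1) (by omega) B u v x z hx (by omega) hB hvz
    have t : G.dist x y ≤ G.dist x z + G.dist z y := hG.dist_triangle
    omega
  · -- d(u,z) + 1 = d(u,x) : use IH with K-2 and neighbor s of x towards u
    have hK2 : 2 ≤ K := by omega
    have hxu0 : G.dist x u ≠ 0 := by rw [G.dist_comm]; omega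
    obtain ⟨s, hxs, hsu⟩ := step_toward hG hxu0
    have dxs : G.dist x s = 1 := SimpleGraph.dist_eq_one_iff_adj.mpr hxs
    have dxu : G.dist x u = G.dist u x := G.dist_comm
    have dus : G.dist u s = G.dist s u := G.dist_comm
    have dsx : G.dist s x = 1 := by rw [G.dist_comm]; exact dxs
    have tsv : G.dist s v ≤ G.dist s x + G.dist x v := hG.dist_triangle
    have tuvs : G.dist u v ≤ G.dist u s + G.dist s v := hG.dist_triangle
    have dsv : G.dist s v = B + 1 := by omega
    have hsItv : Itv G u v s := by
      show G.dist u s + G.dist s v = G.dist u v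
      omega
    have hvs : G.dist v s = B + 1 := by rw [G.dist_comm]; exact dsv
    have hvz : G.dist v z = (B + 1) + (K - 2) := by rw [G.dist_comm]; omega
    have ih := IHK (K - 2) (by omega) (B + 1) u v s z hsItv (by omega) hvs hvz
    have t1 : G.dist x y ≤ G.dist x z + G.dist z y := hG.dist_triangle
    have t2 : G.dist x z ≤ G.dist x s + G.dist s z := hG.dist_triangle
    omega
  · -- d(u,z) = d(u,x) + 1
    have txz : G.dist x z ≤ G.dist x y + G.dist y z := hG.dist_triangle
    have txy : G.dist x y ≤ G.dist x z + G.dist z y := hG.dist_triangle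
    have trich2 : G.dist x z = G.dist x y + 1 ∨ G.dist x z + 1 = G.dist x y ∨
        G.dist x z = G.dist x y := by omega
    have dzu : G.dist z u = G.dist u x + 1 := by rw [G.dist_comm]; omega
    have dyu : G.dist y u = G.dist u x := by rw [G.dist_comm]; omega
    rcases trich2 with h1 | h1 | h1
    · -- α applied to (x ; y~z ; v)
      have a1 := hα x y z v (by show G.dist x y + G.dist y z = G.dist x z; omega)
        (by show G.dist y z + G.dist z v = G.dist y v; omega) hyz
      -- a1 : d x y + d y v ≤ d x v + i
      omega
    · -- α applied to (x ; z~y ; u)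
      have a2 := hα x z y u (by show G.dist x z + G.dist z y = G.dist x y; omega)
        (by show G.dist z y + G.dist y u = G.dist z u; omega) hyz.symm
      -- a2 : d x z + d z u ≤ d x u + i
      have dxu : G.dist x u = G.dist u x := G.dist_comm
      omega
    · -- d(x,z) = d(x,y) : bring in q, neighbor of x towards v
      have hxv0 : G.dist x v ≠ 0 := by omega
      obtain ⟨q, hxq, hqv⟩ := step_toward hG hxv0
      have dxq : G.dist x q = 1 := SimpleGraph.dist_eq_one_iff_adj.mpr hxq
      have dqx : G.dist q x = 1 := by rw [G.dist_comm]; exact dxq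
      have tuq : G.dist u q ≤ G.dist u x + G.dist x q := hG.dist_triangle
      have tuvq : G.dist u v ≤ G.dist u q + G.dist q v := hG.dist_triangle
      have duq : G.dist u q = G.dist u x + 1 := by omega
      have hqItv : Itv G u v q := by
        show G.dist u q + G.dist q v = G.dist u v
        omega
      have dyx : G.dist y x = G.dist x y := G.dist_comm
      have tyq : G.dist y q ≤ G.dist y x + G.dist x q := hG.dist_triangle
      have tyx : G.dist y x ≤ G.dist y q + G.dist q x := hG.dist_triangle
      have trich3 : G.dist y q = G.dist x y + 1 ∨ G.dist y q + 1 = G.dist x y ∨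
          G.dist y q = G.dist x y := by omega
      rcases trich3 with h2 | h2 | h2
      · -- α applied to (y ; x~q ; v)
        have a3 := hα y x q v (by show G.dist y x + G.dist x q = G.dist y q; omega)
          (by show G.dist x q + G.dist q v = G.dist x v; omega) hxq
        -- a3 : d y x + d x v ≤ d y v + i
        omega
      · -- α applied to (y ; q~x ; u)
        have dqu : G.dist q u = G.dist u x + 1 := by rw [G.dist_comm]; exact duq
        have dxu : G.dist x u = G.dist u x := G.dist_comm
        have a4 := hα y q x u (by show G.dist y q + G.dist q x = G.dist y x; omega)
          (by show G.dist q x + G.dist x u = G.dist q u; omega) hxq.symm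
        -- a4 : d y q + d q u ≤ d y u + i
        omega
      · -- d(y,q) = d(x,y)
        have tqz : G.dist x z ≤ G.dist x q + G.dist q z := hG.dist_triangle
        by_cases h3 : G.dist q z + 1 = G.dist x y
        · -- α applied to (q ; z~y ; u)
          have dqy : G.dist q y = G.dist x y := by rw [G.dist_comm]; exact h2
          have dqu : G.dist q u = G.dist u x + 1 := by rw [G.dist_comm]; exact duq
          have a5 := hα q z y u (by show G.dist q z + G.dist z y = G.dist q y; omega)
            (by show G.dist z y + G.dist y u = G.dist z u; omega) hyz.symm
          -- a5 : d q z + d z u ≤ d q u + i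
          omega
        · -- d(q,z) ≥ d(x,y) : use IH with (K, B-1)
          have hvq : G.dist v q = B - 1 := by rw [G.dist_comm]; omega
          have hvz : G.dist v z = (B - 1) + K := by rw [G.dist_comm]; omega
          have ih := IHB (B - 1) (by omega) u v q z hqItv (by omega) hvq hvz
          omega

theorem stmt_0 [Fintype V] (G : SimpleGraph V) (hG : G.Connected) (i k : ℕ)
    (hα : AlphaI G i) (u v x y : V) (hx : Itv G u v x)
    (h1 : G.dist u x = G.dist u y) (h2 : G.dist v y ≤ G.dist v x + k) :
    G.dist x y ≤ k + i + 2 := by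
  have hxItv : G.dist u x + G.dist x v = G.dist u v := hx
  have t : G.dist u v ≤ G.dist u y + G.dist y v := hG.dist_triangle
  have e1 : G.dist y v = G.dist v y := G.dist_comm
  have e2 : G.dist x v = G.dist v x := G.dist_comm
  have hle : G.dist v x ≤ G.dist v y := by omega
  have hkey := key hG hα (G.dist v y - G.dist v x) (G.dist v x) u v x y hx h1 rfl
    (by omega)
  omega
end

section
/- If G is an α_i-metric graph, then for every pair of vertices u,v and every integer k with 0<k<d(u,v), any two vertices x,y in the slice S_k(u,v) = {z ∈ I(u,v) : d(u,z)=k} satisfy d(x,y) ≤ i+1. That is, the interval thinness of G is at most i+1. -/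
open SimpleGraph

variable {V : Type*}

/-- From a vertex at positive distance from `v`, one can step to a neighbor one closer. -/
lemma exists_step (G : SimpleGraph V) {x v : V} (h : 0 < G.dist x v) :
    ∃ z, G.Adj x z ∧ G.dist x z = 1 ∧ G.dist z v + 1 = G.dist x v := by
  obtain ⟨p, hp⟩ := SimpleGraph.exists_walk_of_dist_ne_zero (Nat.pos_iff_ne_zero.mp h)
  cases p with
  | nil => simp at h
  | cons hadj q =>
    rename_i z
    refine ⟨z, hadj, SimpleGraph.dist_eq_one_iff_adj.mpr hadj, ?_⟩
    have h1 : G.dist z v ≤ q.length := SimpleGraph.dist_le q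
    obtain ⟨r, hr⟩ := q.reachable.exists_walk_length_eq_dist
    have h2 : G.dist x v ≤ (SimpleGraph.Walk.cons hadj r).length := SimpleGraph.dist_le _
    simp only [SimpleGraph.Walk.length_cons] at h2 hp
    omega

lemma aux_slice (G : SimpleGraph V) (hG : G.Connected) (i : ℕ) (hα : AlphaI G i) (u v : V) :
    ∀ m : ℕ, ∀ x y : V, Itv G u v x → Itv G u v y → G.dist u x = G.dist u y →
      G.dist x v = m → 0 < m → G.dist x y ≤ i + 1 := by
  intro m
  induction m using Nat.strong_induction_on with
  | _ m IH =>
    intro x y hx hy hxy hxm hm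
    unfold Itv at hx hy
    have hyv : G.dist y v = m := by omega
    obtain ⟨x', hadjx, hxx', hx'v⟩ := exists_step G (x := x) (v := v) (by omega)
    have hux' : G.dist u x' = G.dist u x + 1 := by
      have h1 : G.dist u x' ≤ G.dist u x + G.dist x x' := hG.dist_triangle
      have h2 : G.dist u v ≤ G.dist u x' + G.dist x' v := hG.dist_triangle
      omega
    have ht1 : G.dist x' y ≤ G.dist x' x + G.dist x y := hG.dist_triangle
    have ht2 : G.dist x y ≤ G.dist x x' + G.dist x' y := hG.dist_triangle
    have hcx'x : G.dist x' x = G.dist x x' := SimpleGraph.dist_comm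
    have hcyx : G.dist y x = G.dist x y := SimpleGraph.dist_comm
    have hcyx' : G.dist y x' = G.dist x' y := SimpleGraph.dist_comm
    have hcyu : G.dist y u = G.dist u y := SimpleGraph.dist_comm
    have hcxu : G.dist x u = G.dist u x := SimpleGraph.dist_comm
    have hcx'u : G.dist x' u = G.dist u x' := SimpleGraph.dist_comm
    have hE : G.dist x' y = G.dist x y + 1 ∨ G.dist x' y + 1 = G.dist x y ∨
        G.dist x' y = G.dist x y := by omega
    rcases hE with hE | hE | hE
    · -- fire (a'): quadruple (y, x, x', v) : d(y,x)+d(x,v) ≤ d(y,v)+i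
      have key := hα y x x' v
        (by show G.dist y x + G.dist x x' = G.dist y x'; omega)
        (by show G.dist x x' + G.dist x' v = G.dist x v; omega)
        hadjx
      omega
    · -- fire (b'): quadruple (y, x', x, u) : d(y,x')+d(x',u) ≤ d(y,u)+i
      have key := hα y x' x u
        (by show G.dist y x' + G.dist x' x = G.dist y x; omega)
        (by show G.dist x' x + G.dist x u = G.dist x' u; omega)
        hadjx.symm
      omega
    · -- d(x',y) = d(x,y)
      by_cases hm1 : m = 1
      · -- then x' = v and d(x,y) = d(v,y) = 1
        have hx'veq : x' = v := by
          have := hG.dist_eq_zero_iff (u := x') (v := v)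
          have hz : G.dist x' v = 0 := by omega
          exact this.mp hz
        subst hx'veq
        have : G.dist x' y = m := by rw [SimpleGraph.dist_comm]; exact hyv
        omega
      · -- m ≥ 2 : step y as well
        obtain ⟨y', hadjy, hyy', hy'v⟩ := exists_step G (x := y) (v := v) (by omega)
        have huy' : G.dist u y' = G.dist u y + 1 := by
          have h1 : G.dist u y' ≤ G.dist u y + G.dist y y' := hG.dist_triangle
          have h2 : G.dist u v ≤ G.dist u y' + G.dist y' v := hG.dist_triangle
          omega
        have ht3 : G.dist x' y' ≤ G.dist x' y + G.dist y y' := hG.dist_triangle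
        have ht4 : G.dist x' y ≤ G.dist x' y' + G.dist y' y := hG.dist_triangle
        have hcy'y : G.dist y' y = G.dist y y' := SimpleGraph.dist_comm
        have hcy'u : G.dist y' u = G.dist u y' := SimpleGraph.dist_comm
        have hcyu2 : G.dist y u = G.dist u y := SimpleGraph.dist_comm
        have hF : G.dist x' y' = G.dist x y + 1 ∨ G.dist x' y' + 1 = G.dist x y ∨
            G.dist x' y' = G.dist x y := by omega
        rcases hF with hF | hF | hF
        · -- fire (c): quadruple (x', y, y', v) : d(x',y)+d(y,v) ≤ d(x',v)+i
          have key := hα x' y y' v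
            (by show G.dist x' y + G.dist y y' = G.dist x' y'; omega)
            (by show G.dist y y' + G.dist y' v = G.dist y v; omega)
            hadjy
          omega
        · -- fire (d): quadruple (x', y', y, u) : d(x',y')+d(y',u) ≤ d(x',u)+i
          have key := hα x' y' y u
            (by show G.dist x' y' + G.dist y' y = G.dist x' y; omega)
            (by show G.dist y' y + G.dist y u = G.dist y' u; omega)
            hadjy.symm
          omega
        · -- induction: x', y' lie in the (k+1)-slice, distance to v is m-1
          have key := IH (m - 1) (by omega) x' y'
            (by show G.dist u x' + G.dist x' v = G.dist u v; omega)
            (by show G.dist u y' + G.dist y' v = G.dist u v; omega)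
            (by omega) (by omega) (by omega)
          omega

theorem stmt_1 [Fintype V] (G : SimpleGraph V) (hG : G.Connected) (i : ℕ)
    (hα : AlphaI G i) (u v x y : V) (k : ℕ) (hk0 : 0 < k) (hk1 : k < G.dist u v)
    (hx : Itv G u v x) (hy : Itv G u v y)
    (hdx : G.dist u x = k) (hdy : G.dist u y = k) :
    G.dist x y ≤ i + 1 := by
  have hx' := hx
  unfold Itv at hx'
  exact aux_slice G hG i hα u v (G.dist x v) x y hx hy (by omega) rfl (by omega)
end

section
/- Every disk D(v,r) of an α_i-metric graph G is d^{2i-1}-convex: for any two vertices x,y ∈ D(v,r) with d(x,y) ≥ 2i-1, the entire interval I(x,y) is contained in D(v,r). -/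
open SimpleGraph

variable {V : Type*}

private lemma dist_getVert_le' {G : SimpleGraph V} (hG : G.Connected) {x y : V}
    (W : G.Walk x y) (j : ℕ) : G.dist x (W.getVert j) ≤ j := by
  induction j with
  | zero => simp
  | succ n ih =>
    by_cases h : n < W.length
    · have hadj := W.adj_getVert_succ h
      have h1 : G.dist (W.getVert n) (W.getVert (n+1)) = 1 :=
        dist_eq_one_iff_adj.mpr hadj
      have := hG.dist_triangle (u := x) (v := W.getVert n) (w := W.getVert (n+1))
      omega
    · have h1 : W.getVert (n+1) = y := W.getVert_of_length_le (by omega)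
      have h2 : W.getVert n = y := W.getVert_of_length_le (by omega)
      rw [h1, ← h2]; omega

theorem stmt_2 [Fintype V] (G : SimpleGraph V) (hG : G.Connected) (i : ℕ)
    (hα : AlphaI G i) (v : V) (r : ℕ) (x y z : V)
    (hx : G.dist v x ≤ r) (hy : G.dist v y ≤ r)
    (hd : 2 * i - 1 ≤ G.dist x y) (hz : Itv G x y z) :
    G.dist v z ≤ r := by
  by_contra hcon
  push_neg at hcon
  set k := G.dist x y with hk
  obtain ⟨W1, h1⟩ := hG.exists_walk_length_eq_dist x z
  obtain ⟨W2, h2⟩ := hG.exists_walk_length_eq_dist z y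
  set W : G.Walk x y := W1.append W2 with hW
  have hWlen : W.length = k := by
    rw [hW, Walk.length_append, h1, h2]; exact hz
  -- geodesic property of the walk
  have hgeo : ∀ j ≤ k, G.dist x (W.getVert j) = j ∧ G.dist (W.getVert j) y = k - j := by
    intro j hj
    have ha : G.dist x (W.getVert j) ≤ j := dist_getVert_le' hG W j
    have hb : G.dist (W.getVert j) y ≤ k - j := by
      have hrv : W.reverse.getVert (k - j) = W.getVert j := by
        rw [Walk.getVert_reverse, hWlen]
        congr 1; omega
      have := dist_getVert_le' hG W.reverse (k - j)
      rw [hrv] at this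
      rwa [G.dist_comm]
    have htri : k ≤ G.dist x (W.getVert j) + G.dist (W.getVert j) y :=
      hG.dist_triangle
    exact ⟨by omega, by omega⟩
  -- z is on the walk
  have hzW : W.getVert (G.dist x z) = z := by
    rw [hW, Walk.getVert_append]
    simp [h1]
  have hz' : G.dist x z + G.dist z y = k := hz
  have hxzk : G.dist x z ≤ k := by omega
  set f : ℕ → ℕ := fun j => G.dist v (W.getVert j) with hf
  -- adjacent vertices on walk have dist-to-v differing by ≤ 1, and dist 1 apart
  have hadj : ∀ j < k, G.Adj (W.getVert j) (W.getVert (j+1)) := by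
    intro j hj; exact W.adj_getVert_succ (by omega)
  have hstep : ∀ j < k, f (j+1) ≤ f j + 1 ∧ f j ≤ f (j+1) + 1 := by
    intro j hj
    have h1' : G.dist (W.getVert j) (W.getVert (j+1)) = 1 :=
      dist_eq_one_iff_adj.mpr (hadj j hj)
    have t1 := hG.dist_triangle (u := v) (v := W.getVert j) (w := W.getVert (j+1))
    have t2 := hG.dist_triangle (u := v) (v := W.getVert (j+1)) (w := W.getVert j)
    have h1'' : G.dist (W.getVert (j+1)) (W.getVert j) = 1 := by
      rw [SimpleGraph.dist_comm]; exact h1'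
    simp only [hf]
    constructor <;> omega
  -- the max of f on [0,k]
  have hne : (Finset.range (k+1)).Nonempty := ⟨0, by simp⟩
  set M := (Finset.range (k+1)).sup f with hM
  have hsup : ∀ j ≤ k, f j ≤ M := fun j hj =>
    Finset.le_sup (by simp; omega)
  obtain ⟨jm, hjm, hjmM⟩ := Finset.exists_mem_eq_sup _ hne f
  set S := (Finset.range (k+1)).filter (fun j => f j = M) with hS
  have hSne : S.Nonempty := ⟨jm, by simp [hS, Finset.mem_range] at hjm ⊢; exact ⟨by simpa using hjm, hjmM.symm⟩⟩
  set j1 := S.min' hSne with hj1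
  set j2 := S.max' hSne with hj2
  have hj1S : j1 ∈ S := S.min'_mem hSne
  have hj2S : j2 ∈ S := S.max'_mem hSne
  obtain ⟨hj1r, hj1f⟩ : j1 ∈ Finset.range (k+1) ∧ f j1 = M := by
    simpa [hS] using hj1S
  obtain ⟨hj2r, hj2f⟩ : j2 ∈ Finset.range (k+1) ∧ f j2 = M := by
    simpa [hS] using hj2S
  rw [Finset.mem_range] at hj1r hj2r
  have hj12 : j1 ≤ j2 := S.min'_le _ hj2S
  -- M > r
  have hMr : r < M := by
    have : f (G.dist x z) = G.dist v z := by rw [hf]; simp [hzW]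
    have := hsup (G.dist x z) hxzk
    omega
  -- endpoints
  have hf0 : f 0 = G.dist v x := by simp [hf]
  have hfk : f k = G.dist v y := by simp [hf, ← hWlen]
  have hj1pos : 1 ≤ j1 := by
    rcases Nat.eq_zero_or_pos j1 with h | h
    · rw [h] at hj1f; omega
    · omega
  have hj2lt : j2 < k := by
    rcases eq_or_lt_of_le (show j2 ≤ k by omega) with h | h
    · rw [h] at hj2f; omega
    · exact h
  -- neighbor below j1 has f = M - 1
  have hj1m : f (j1 - 1) + 1 = M := by
    have hnot : (j1 - 1) ∉ S := fun hmem => by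
      have := S.min'_le _ hmem; omega
    have h1' : f (j1-1) ≠ M := by
      intro h; exact hnot (by simp [hS, Finset.mem_range]; exact ⟨by omega, h⟩)
    have h2' := hsup (j1-1) (by omega)
    have h3' := hstep (j1-1) (by omega)
    have : j1 - 1 + 1 = j1 := by omega
    rw [this] at h3'
    omega
  have hj2m : f (j2 + 1) + 1 = M := by
    have hnot : (j2 + 1) ∉ S := fun hmem => by
      have := S.le_max' _ hmem; omega
    have h1' : f (j2+1) ≠ M := by
      intro h; exact hnot (by simp [hS, Finset.mem_range]; exact ⟨by omega, h⟩)
    have h2' := hsup (j2+1) (by omega)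
    have h3' := hstep j2 (by omega)
    omega
  -- first application of α_i : quadruple (v, p(j1-1), p(j1), y)
  have hadj1 : G.Adj (W.getVert (j1-1)) (W.getVert j1) := by
    have := hadj (j1-1) (by omega)
    rwa [show j1 - 1 + 1 = j1 by omega] at this
  have hd1 : G.dist (W.getVert (j1-1)) (W.getVert j1) = 1 :=
    dist_eq_one_iff_adj.mpr hadj1
  have hI1 : Itv G v (W.getVert j1) (W.getVert (j1-1)) := by
    unfold Itv; rw [hd1]
    have : G.dist v (W.getVert (j1-1)) = f (j1-1) := rfl
    have : G.dist v (W.getVert j1) = f j1 := rfl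
    show f (j1-1) + 1 = f j1
    omega
  have hI2 : Itv G (W.getVert (j1-1)) y (W.getVert j1) := by
    unfold Itv; rw [hd1]
    have e1 := (hgeo (j1-1) (by omega)).2
    have e2 := (hgeo j1 (by omega)).2
    omega
  have hq1 := hα v (W.getVert (j1-1)) (W.getVert j1) y hI1 hI2 hadj1
  -- second application: quadruple (v, p(j2+1), p(j2), x)
  have hadj2 : G.Adj (W.getVert (j2+1)) (W.getVert j2) := (hadj j2 (by omega)).symm
  have hd2 : G.dist (W.getVert (j2+1)) (W.getVert j2) = 1 :=
    dist_eq_one_iff_adj.mpr hadj2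
  have hI3 : Itv G v (W.getVert j2) (W.getVert (j2+1)) := by
    unfold Itv; rw [hd2]
    show f (j2+1) + 1 = f j2
    omega
  have hI4 : Itv G (W.getVert (j2+1)) x (W.getVert j2) := by
    unfold Itv; rw [hd2]
    have e1 : G.dist (W.getVert (j2+1)) x = j2 + 1 := by
      rw [SimpleGraph.dist_comm]; exact (hgeo (j2+1) (by omega)).1
    have e2 : G.dist (W.getVert j2) x = j2 := by
      rw [SimpleGraph.dist_comm]; exact (hgeo j2 (by omega)).1
    omega
  have hq2 := hα v (W.getVert (j2+1)) (W.getVert j2) x hI3 hI4 hadj2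
  -- assemble the contradiction
  have e1 := (hgeo (j1-1) (by omega)).2
  have e2 : G.dist (W.getVert (j2+1)) x = j2 + 1 := by
    rw [SimpleGraph.dist_comm]; exact (hgeo (j2+1) (by omega)).1
  have hvx : G.dist v (W.getVert (j1-1)) = f (j1-1) := rfl
  have hvy : G.dist v (W.getVert (j2+1)) = f (j2+1) := rfl
  rw [hvx, e1] at hq1
  rw [hvy, e2] at hq2
  omega
end

section
/- Let G be an α_i-metric graph. For any vertices x,y,z,v with z ∈ I(x,y), one has d(z,v) ≤ max{d(x,v), d(y,v)} - min{d(x,z), d(y,z)} + 2i+1. -/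
open SimpleGraph

variable {V : Type*}

namespace AlphaIProof

variable {G : SimpleGraph V}

/-- From `d z x = n+1`, produce a neighbor of `z` one step closer to `x`. -/
private lemma exists_next (hG : G.Connected) {z x : V} {n : ℕ} (h : G.dist z x = n + 1) :
    ∃ p, G.Adj z p ∧ G.dist p x = n := by
  obtain ⟨w, hw⟩ := hG.exists_walk_length_eq_dist z x
  cases w with
  | nil =>
    rw [h] at hw
    simp at hw
  | @cons _ p _ hadj q =>
    refine ⟨p, hadj, ?_⟩
    have h1 : G.dist p x ≤ n := by
      have hlen : q.length + 1 = n + 1 := by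
        simpa [SimpleGraph.Walk.length_cons, h] using hw
      have := SimpleGraph.dist_le q
      omega
    have hzp : G.dist z p = 1 := SimpleGraph.dist_eq_one_iff_adj.mpr hadj
    have h2 : G.dist z x ≤ G.dist z p + G.dist p x := hG.dist_triangle
    omega

/-- Slice lemma: two vertices of a common interval, equidistant from one end,
are at distance at most `i+1`. -/
private lemma slice_lemma (hG : G.Connected) {i : ℕ} (hα : AlphaI G i) :
    ∀ κ : ℕ, ∀ x y z v : V, Itv G x y z → Itv G x y v →
      G.dist x z = κ → G.dist x v = κ → G.dist z v ≤ i + 1 := by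
  intro κ
  induction κ with
  | zero =>
    intro x y z v _ _ hz hv
    have hz' : x = z := ((hG.preconnected x z).dist_eq_zero_iff).mp hz
    have hv' : x = v := ((hG.preconnected x v).dist_eq_zero_iff).mp hv
    subst hz'
    subst hv'
    rw [SimpleGraph.dist_self]
    omega
  | succ κ' IH =>
    intro x y z v hz hv hxz hxv
    unfold Itv at hz hv
    -- hz : d x z + d z y = d x y, hv : d x v + d v y = d x y
    have czx : G.dist z x = G.dist x z := SimpleGraph.dist_comm
    have cvx : G.dist v x = G.dist x v := SimpleGraph.dist_comm
    have czy : G.dist z y = G.dist y z := SimpleGraph.dist_comm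
    have cvy : G.dist v y = G.dist y v := SimpleGraph.dist_comm
    have czv : G.dist z v = G.dist v z := SimpleGraph.dist_comm
    obtain ⟨p, hpadj, hpx⟩ := exists_next hG (show G.dist z x = κ' + 1 by omega)
    obtain ⟨q, hqadj, hqx⟩ := exists_next hG (show G.dist v x = κ' + 1 by omega)
    have hzp : G.dist z p = 1 := SimpleGraph.dist_eq_one_iff_adj.mpr hpadj
    have hvq : G.dist v q = 1 := SimpleGraph.dist_eq_one_iff_adj.mpr hqadj
    have cpx : G.dist p x = G.dist x p := SimpleGraph.dist_comm
    have cqx : G.dist q x = G.dist x q := SimpleGraph.dist_comm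
    have cpy : G.dist p y = G.dist y p := SimpleGraph.dist_comm
    have cqy : G.dist q y = G.dist y q := SimpleGraph.dist_comm
    have cpz : G.dist p z = G.dist z p := SimpleGraph.dist_comm
    have cqv : G.dist q v = G.dist v q := SimpleGraph.dist_comm
    have cpv : G.dist p v = G.dist v p := SimpleGraph.dist_comm
    have cqz : G.dist q z = G.dist z q := SimpleGraph.dist_comm
    have cpq : G.dist p q = G.dist q p := SimpleGraph.dist_comm
    -- levels of p and q relative to y
    have typ1 : G.dist y p ≤ G.dist y z + G.dist z p := hG.dist_triangle
    have typ2 : G.dist x y ≤ G.dist x p + G.dist p y := hG.dist_triangle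
    have hyp : G.dist y p = G.dist y z + 1 := by omega
    have tyq1 : G.dist y q ≤ G.dist y v + G.dist v q := hG.dist_triangle
    have tyq2 : G.dist x y ≤ G.dist x q + G.dist q y := hG.dist_triangle
    have hyveq : G.dist v y = G.dist z y := by omega
    have hyq : G.dist y q = G.dist y v + 1 := by omega
    -- trichotomy for d p v
    have tb1 : G.dist p v ≤ G.dist p z + G.dist z v := hG.dist_triangle
    have tb2 : G.dist z v ≤ G.dist z p + G.dist p v := hG.dist_triangle
    rcases (show G.dist p v + 1 = G.dist z v ∨ G.dist p v = G.dist z v + 1 ∨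
        G.dist p v = G.dist z v by omega) with hc | hc | hc
    · -- p ∈ I(z,v): use α(y, z, p, v)
      have I1 : Itv G y p z := by unfold Itv; omega
      have I2 : Itv G z v p := by unfold Itv; omega
      have conc := hα y z p v I1 I2 hpadj
      omega
    · -- z ∈ I(p,v)-ish: use α(v, z, p, x)
      have I1 : Itv G v p z := by unfold Itv; omega
      have I2 : Itv G z x p := by unfold Itv; omega
      have conc := hα v z p x I1 I2 hpadj
      omega
    · -- d p v = d z v; now trichotomy for d q z
      have tb3 : G.dist q z ≤ G.dist q v + G.dist v z := hG.dist_triangle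
      have tb4 : G.dist v z ≤ G.dist v q + G.dist q z := hG.dist_triangle
      rcases (show G.dist q z + 1 = G.dist z v ∨ G.dist q z = G.dist z v + 1 ∨
          G.dist q z = G.dist z v by omega) with hd | hd | hd
      · -- q ∈ I(v,z): use α(y, v, q, z)
        have I1 : Itv G y q v := by unfold Itv; omega
        have I2 : Itv G v z q := by unfold Itv; omega
        have conc := hα y v q z I1 I2 hqadj
        omega
      · -- v ∈ I(q,z)-ish: use α(z, v, q, x)
        have I1 : Itv G z q v := by unfold Itv; omega
        have I2 : Itv G v x q := by unfold Itv; omega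
        have conc := hα z v q x I1 I2 hqadj
        omega
      · -- d q z = d z v; trichotomy for d p q
        have tb5 : G.dist p q ≤ G.dist p v + G.dist v q := hG.dist_triangle
        have tb6 : G.dist p v ≤ G.dist p q + G.dist q v := hG.dist_triangle
        rcases (show G.dist p q = G.dist z v + 1 ∨ G.dist p q + 1 = G.dist z v ∨
            G.dist p q = G.dist z v by omega) with he | he | he
        · -- v ∈ I(p,q): use α(p, v, q, x)
          have I1 : Itv G p q v := by unfold Itv; omega
          have I2 : Itv G v x q := by unfold Itv; omega
          have conc := hα p v q x I1 I2 hqadj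
          omega
        · -- p ∈ I(z,q): use α(y, z, p, q)
          have I1 : Itv G y p z := by unfold Itv; omega
          have I2 : Itv G z q p := by unfold Itv; omega
          have conc := hα y z p q I1 I2 hpadj
          omega
        · -- recurse on level κ'
          have Ip : Itv G x y p := by unfold Itv; omega
          have Iq : Itv G x y q := by unfold Itv; omega
          have := IH x y p q Ip Iq (by omega) (by omega)
          omega

/-- Cascade along a geodesic from `z` towards `v`, staying in the slice of `z`
until either `v` is reached inside the slice or a terminal bound is found. -/
private lemma cascade (hG : G.Connected) {i : ℕ} (hα : AlphaI G i) (x y v : V) :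
    ∀ n : ℕ, ∀ z : V, Itv G x y z → G.dist z v = n →
      (Itv G x y v ∧ G.dist x v = G.dist x z) ∨
      (∃ w, Itv G x y w ∧ G.dist x w = G.dist x z ∧ G.dist y w = G.dist y z ∧
        (G.dist w v + G.dist x z ≤ G.dist x v + i ∨
         G.dist w v + G.dist y z ≤ G.dist y v + i)) := by
  intro n
  induction n with
  | zero =>
    intro z hz hzv
    have : z = v := ((hG.preconnected z v).dist_eq_zero_iff).mp hzv
    subst this
    exact Or.inl ⟨hz, rfl⟩
  | succ n IH =>
    intro z hz hzv
    obtain ⟨a, haadj, hav⟩ := exists_next hG hzv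
    have hza : G.dist z a = 1 := SimpleGraph.dist_eq_one_iff_adj.mpr haadj
    unfold Itv at hz
    have caz : G.dist a z = G.dist z a := SimpleGraph.dist_comm
    have czy : G.dist z y = G.dist y z := SimpleGraph.dist_comm
    have cay : G.dist a y = G.dist y a := SimpleGraph.dist_comm
    have cxa : G.dist x a = G.dist a x := SimpleGraph.dist_comm
    have t1 : G.dist x a ≤ G.dist x z + G.dist z a := hG.dist_triangle
    have t2 : G.dist x z ≤ G.dist x a + G.dist a z := hG.dist_triangle
    have t3 : G.dist y a ≤ G.dist y z + G.dist z a := hG.dist_triangle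
    have t4 : G.dist y z ≤ G.dist y a + G.dist a z := hG.dist_triangle
    by_cases hxa : G.dist x a = G.dist x z + 1
    · -- terminal towards x : α(x, z, a, v)
      refine Or.inr ⟨z, (by unfold Itv; omega), rfl, rfl, Or.inl ?_⟩
      have I1 : Itv G x a z := by unfold Itv; omega
      have I2 : Itv G z v a := by unfold Itv; omega
      have conc := hα x z a v I1 I2 haadj
      omega
    · by_cases hya : G.dist y a = G.dist y z + 1
      · -- terminal towards y : α(y, z, a, v)
        refine Or.inr ⟨z, (by unfold Itv; omega), rfl, rfl, Or.inr ?_⟩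
        have I1 : Itv G y a z := by unfold Itv; omega
        have I2 : Itv G z v a := by unfold Itv; omega
        have conc := hα y z a v I1 I2 haadj
        omega
      · -- a stays in the slice : recurse
        have t5 : G.dist x y ≤ G.dist x a + G.dist a y := hG.dist_triangle
        have hxa' : G.dist x a = G.dist x z := by omega
        have hya' : G.dist y a = G.dist y z := by omega
        have Ia : Itv G x y a := by unfold Itv; omega
        rcases IH a Ia hav with ⟨h1, h2⟩ | ⟨w, hw, hw1, hw2, hw3⟩
        · exact Or.inl ⟨h1, by omega⟩
        · exact Or.inr ⟨w, hw, by omega, by omega, by omega⟩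

/-- Main inequality, under the normalization `d x z ≤ d y z`. -/
private lemma main_le (hG : G.Connected) {i : ℕ} (hα : AlphaI G i) (x y z v : V)
    (hz : Itv G x y z) (hkl : G.dist x z ≤ G.dist y z) :
    G.dist z v + G.dist x z ≤ max (G.dist x v) (G.dist y v) + 2 * i + 1 := by
  have hmx : G.dist x v ≤ max (G.dist x v) (G.dist y v) := le_max_left _ _
  have hmy : G.dist y v ≤ max (G.dist x v) (G.dist y v) := le_max_right _ _
  rcases cascade hG hα x y v (G.dist z v) z hz rfl with ⟨hv, hxveq⟩ | ⟨w, hw, hw1, hw2, hw3⟩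
  · -- v lies in the slice of z
    have hs := slice_lemma hG hα (G.dist x z) x y z v hz hv rfl hxveq
    omega
  · -- terminal bound at w, with d z w ≤ i + 1 by the slice lemma
    have hs := slice_lemma hG hα (G.dist x z) x y z w hz hw rfl hw1
    have ht : G.dist z v ≤ G.dist z w + G.dist w v := hG.dist_triangle
    omega

end AlphaIProof

theorem stmt_4 [Fintype V] (G : SimpleGraph V) (hG : G.Connected) (i : ℕ)
    (hα : AlphaI G i) (x y z v : V) (hz : Itv G x y z) :
    G.dist z v + min (G.dist x z) (G.dist y z) ≤
      max (G.dist x v) (G.dist y v) + 2 * i + 1 := by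
  rcases le_total (G.dist x z) (G.dist y z) with h | h
  · rw [min_eq_left h]
    exact AlphaIProof.main_le hG hα x y z v hz h
  · rw [min_eq_right h, max_comm]
    have hz' : Itv G y x z := by
      unfold Itv at *
      have c1 : G.dist y z = G.dist z y := SimpleGraph.dist_comm
      have c2 : G.dist z x = G.dist x z := SimpleGraph.dist_comm
      have c3 : G.dist y x = G.dist x y := SimpleGraph.dist_comm
      omega
    exact AlphaIProof.main_le hG hα y x z v hz' h
end

section
/- If G is an α_i-metric graph, then the diameter of its center C(G) is at most 3i+2, i.e., any two central vertices are at distance at most 3i+2. -/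
open SimpleGraph

variable {V : Type*}

/-! ### Auxiliary lemmas about eccentricities -/

lemma dist_le_ecc [Fintype V] (G : SimpleGraph V) (v z : V) : G.dist v z ≤ ecc G v :=
  Finset.le_sup (Finset.mem_univ z)

lemma exists_ecc_eq [Fintype V] [Nonempty V] (G : SimpleGraph V) (v : V) :
    ∃ w, ecc G v = G.dist v w := by
  obtain ⟨w, -, hw⟩ :=
    Finset.exists_mem_eq_sup (Finset.univ : Finset V) Finset.univ_nonempty
      (fun u => G.dist v u)
  exact ⟨w, hw⟩

lemma grad_le_ecc [Fintype V] [Nonempty V] (G : SimpleGraph V) (v : V) :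
    grad G ≤ ecc G v :=
  Finset.inf'_le _ (Finset.mem_univ v)

/-! ### Auxiliary lemmas about vertices along walks -/

lemma dist_getVert_left {G : SimpleGraph V} (hG : G.Connected) :
    ∀ {a b : V} (W : G.Walk a b) (s : ℕ), G.dist a (W.getVert s) ≤ s := by
  intro a b W
  induction W with
  | nil => intro s; simp [SimpleGraph.Walk.getVert, SimpleGraph.dist_self]
  | @cons a c b hadj W ih =>
      intro s
      cases s with
      | zero => simp
      | succ s =>
          rw [SimpleGraph.Walk.getVert_cons_succ]
          calc G.dist a (W.getVert s) ≤ G.dist a c + G.dist c (W.getVert s) :=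
                hG.dist_triangle
            _ ≤ 1 + s := by
                have h1 : G.dist a c = 1 := (SimpleGraph.dist_eq_one_iff_adj).2 hadj
                have := ih s
                omega
            _ = s + 1 := by omega

lemma dist_getVert_right' {G : SimpleGraph V} :
    ∀ {a b : V} (W : G.Walk a b) (s : ℕ), G.dist (W.getVert s) b ≤ W.length - s := by
  intro a b W
  induction W with
  | nil => intro s; simp [SimpleGraph.Walk.getVert, SimpleGraph.dist_self]
  | @cons a c b hadj W ih =>
      intro s
      cases s with
      | zero =>
          simp only [SimpleGraph.Walk.getVert_zero, Nat.sub_zero]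
          exact SimpleGraph.dist_le (SimpleGraph.Walk.cons hadj W)
      | succ s =>
          rw [SimpleGraph.Walk.getVert_cons_succ]
          have := ih s
          simp only [SimpleGraph.Walk.length_cons]
          omega

/-- On a geodesic (a walk of minimal length), vertices sit at exact distances. -/
lemma geodesic_getVert {G : SimpleGraph V} (hG : G.Connected) {a b : V} (W : G.Walk a b)
    (hW : W.length = G.dist a b) (s : ℕ) (hs : s ≤ W.length) :
    G.dist a (W.getVert s) = s ∧ G.dist (W.getVert s) b + s = W.length := by
  have h1 : G.dist a (W.getVert s) ≤ s := dist_getVert_left hG W s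
  have h2 : G.dist (W.getVert s) b ≤ W.length - s := dist_getVert_right' W s
  have h3 : G.dist a b ≤ G.dist a (W.getVert s) + G.dist (W.getVert s) b :=
    hG.dist_triangle
  omega

/-- distance between two vertices of a walk is at most the index difference. -/
lemma dist_getVert_getVert {G : SimpleGraph V} (hG : G.Connected) :
    ∀ {a b : V} (W : G.Walk a b) (s m : ℕ),
      G.dist (W.getVert s) (W.getVert (s + m)) ≤ m := by
  intro a b W
  induction W with
  | nil => intro s m; simp [SimpleGraph.Walk.getVert, SimpleGraph.dist_self]
  | @cons a c b hadj W ih =>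
      intro s m
      cases s with
      | zero =>
          cases m with
          | zero => simp [SimpleGraph.dist_self]
          | succ m =>
              simp only [SimpleGraph.Walk.getVert_zero, Nat.zero_add,
                SimpleGraph.Walk.getVert_cons_succ]
              calc G.dist a (W.getVert m) ≤ G.dist a c + G.dist c (W.getVert m) :=
                    hG.dist_triangle
                _ ≤ 1 + m := by
                    have h1 : G.dist a c = 1 := (SimpleGraph.dist_eq_one_iff_adj).2 hadj
                    have h2 : G.dist c (W.getVert m) ≤ m := by
                      have := dist_getVert_left hG W m
                      exact this
                    omega
                _ = m + 1 := by omega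
      | succ s =>
          have : s + 1 + m = (s + m) + 1 := by omega
          rw [this, SimpleGraph.Walk.getVert_cons_succ, SimpleGraph.Walk.getVert_cons_succ]
          exact ih s m

/-! ### The anchored-walk lemma

If `d(u,c) = r` exactly, `d(u,z) ≤ r`, `d(c,z) ≥ i+1`, and `v` is a vertex with
`d(u,v) < r` such that `c` lies on a geodesic from `v` to `z`, then we get a
contradiction in an `α_i`-metric graph: walking along a geodesic from `v` to `c`,
the distance to `u` must increase somewhere, and applying the `α_i` condition at that
edge (paired with `z`) yields `r + d(c,z) ≤ d(u,z) + i ≤ r + i`, impossible. -/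
lemma anchor_lemma {G : SimpleGraph V} (hG : G.Connected) {i : ℕ} (hα : AlphaI G i)
    {u v c z : V} {r : ℕ}
    (huv : G.dist u v + 1 ≤ r) (huc : G.dist u c = r) (huz : G.dist u z ≤ r)
    (hq : i + 1 ≤ G.dist c z) (halign : G.dist v z = G.dist v c + G.dist c z) :
    False := by
  obtain ⟨W, hW⟩ := hG.exists_walk_length_eq_dist v c
  set p := W.length with hp
  -- distances along the geodesic from v to c
  have hpos : ∀ s, s ≤ p → G.dist v (W.getVert s) = s ∧
      G.dist (W.getVert s) c + s = p := fun s hs => geodesic_getVert hG W hW s hs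
  -- there is an index where the distance to u increases
  have hWp : W.getVert p = c := SimpleGraph.Walk.getVert_length W
  have hup : G.dist u (W.getVert p) = r := by rw [hWp]; exact huc
  have hex : ∃ s, s < p ∧ G.dist u (W.getVert s) < G.dist u (W.getVert (s + 1)) := by
    by_contra hno
    push_neg at hno
    have hmono : ∀ s, s ≤ p → G.dist u (W.getVert s) ≤ G.dist u v := by
      intro s
      induction s with
      | zero => intro _; simp [SimpleGraph.Walk.getVert_zero]
      | succ s ih =>
          intro hs
          have h1 := hno s (by omega)
          have h2 := ih (by omega)
          omega
    have := hmono p le_rfl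
    omega
  obtain ⟨s, hsp, hinc⟩ := hex
  set ws := W.getVert s with hws
  set ws' := W.getVert (s + 1) with hws'
  -- adjacent vertices on the walk
  have hadj : G.Adj ws ws' := SimpleGraph.Walk.adj_getVert_succ W (by omega)
  have hd1 : G.dist ws ws' = 1 := (SimpleGraph.dist_eq_one_iff_adj).2 hadj
  -- exact increase by one
  have htri : G.dist u ws' ≤ G.dist u ws + G.dist ws ws' := hG.dist_triangle
  have hstep : G.dist u ws + 1 = G.dist u ws' := by omega
  -- positions
  obtain ⟨hvs, hsc⟩ := hpos s (by omega)
  obtain ⟨hvs', hsc'⟩ := hpos (s + 1) (by omega)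
  rw [← hws] at hvs hsc
  rw [← hws'] at hvs' hsc'
  -- distances to z through c
  have hz : ∀ t : ℕ, t ≤ p → G.dist (W.getVert t) z = G.dist (W.getVert t) c + G.dist c z := by
    intro t ht
    obtain ⟨hvt, htc⟩ := hpos t ht
    have h1 : G.dist (W.getVert t) z ≤ G.dist (W.getVert t) c + G.dist c z :=
      hG.dist_triangle
    have h2 : G.dist v z ≤ G.dist v (W.getVert t) + G.dist (W.getVert t) z :=
      hG.dist_triangle
    have h3 : G.dist v c = p := by omega
    omega
  have hzs := hz s (by omega)
  have hzs' := hz (s + 1) (by omega)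
  rw [← hws] at hzs
  rw [← hws'] at hzs'
  -- α_i application at the edge (ws, ws') with endpoints u and z
  have hItv1 : Itv G u ws' ws := by
    unfold Itv
    omega
  have hItv2 : Itv G ws z ws' := by
    unfold Itv
    omega
  have hcon := hα u ws ws' z hItv1 hItv2 hadj
  -- lower bound : d(u, ws) + d(ws, c) ≥ d(u,c) = r
  have hlow : r ≤ G.dist u ws + G.dist ws c := by
    have : G.dist u c ≤ G.dist u ws + G.dist ws c := hG.dist_triangle
    omega
  omega

theorem stmt_6 [Fintype V] [Nonempty V] (G : SimpleGraph V) (hG : G.Connected) (i : ℕ)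
    (hα : AlphaI G i) (x y : V) (hx : ecc G x = grad G) (hy : ecc G y = grad G) :
    G.dist x y ≤ 3 * i + 2 := by
  by_contra hk'
  push_neg at hk'
  set r := grad G with hr
  set k := G.dist x y with hkdef
  have hk : 3 * i + 3 ≤ k := hk'
  -- distances from the two central vertices are bounded by r
  have hxcap : ∀ z, G.dist x z ≤ r := fun z => hx ▸ dist_le_ecc G x z
  have hycap : ∀ z, G.dist y z ≤ r := fun z => hy ▸ dist_le_ecc G y z
  have hrk : k ≤ r := hxcap y
  -- a geodesic from x to y
  obtain ⟨P, hP⟩ := hG.exists_walk_length_eq_dist x y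
  set p : ℕ → V := fun j => P.getVert j with hpdef
  have hPlen : P.length = k := hP
  have hposP : ∀ j, j ≤ k → G.dist x (p j) = j ∧ G.dist (p j) y + j = k := by
    intro j hj
    have := geodesic_getVert hG P hP j (by omega)
    rwa [hPlen] at this
  have hp0 : p 0 = x := SimpleGraph.Walk.getVert_zero P
  have hpk : p k = y := by
    have := SimpleGraph.Walk.getVert_length P
    rwa [hPlen] at this
  have hadjP : ∀ j, j < k → G.Adj (p j) (p (j + 1)) := by
    intro j hj
    exact SimpleGraph.Walk.adj_getVert_succ P (by omega)
  have hpair : ∀ s m, s + m ≤ k → G.dist (p s) (p (s + m)) ≤ m := by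
    intro s m _
    exact dist_getVert_getVert hG P s m
  -- the middle vertex p (i+1) and a vertex u farthest from it
  set t := i + 1 with ht
  have htk : t ≤ k := by omega
  obtain ⟨u, hu⟩ := exists_ecc_eq G (p t)
  have hut : r ≤ G.dist u (p t) := by
    have h1 : r ≤ ecc G (p t) := grad_le_ecc G (p t)
    have h2 : G.dist u (p t) = G.dist (p t) u := SimpleGraph.dist_comm ..
    omega
  -- flatness: d(u, p j) = r for j = 0 and for t ≤ j ≤ k
  set f : ℕ → ℕ := fun j => G.dist u (p j) with hfdef
  have hadj1 : ∀ j, j < k → G.dist (p j) (p (j + 1)) = 1 := fun j hj =>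
    (SimpleGraph.dist_eq_one_iff_adj).2 (hadjP j hj)
  have hf0le : f 0 ≤ r := by
    have : G.dist u (p 0) = G.dist x u := by rw [hp0]; exact SimpleGraph.dist_comm ..
    simp only [hfdef]
    rw [this]; exact hxcap u
  have hfkle : f k ≤ r := by
    have : G.dist u (p k) = G.dist y u := by rw [hpk]; exact SimpleGraph.dist_comm ..
    simp only [hfdef]
    rw [this]; exact hycap u
  have huy : G.dist u y ≤ r := by
    have : G.dist u y = G.dist y u := SimpleGraph.dist_comm ..
    rw [this]; exact hycap u
  have hux' : G.dist u x ≤ r := by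
    have : G.dist u x = G.dist x u := SimpleGraph.dist_comm ..
    rw [this]; exact hxcap u
  -- (a) downward: r ≤ f j for j ≤ t
  have hdown : ∀ m, m ≤ t → r ≤ f (t - m) := by
    intro m
    induction m with
    | zero => intro _; simpa using hut
    | succ m ih =>
        intro hm
        have hj : t - (m + 1) + 1 = t - m := by omega
        set j := t - (m + 1) with hjdef
        have hjt : j + 1 ≤ t := by omega
        have hprev : r ≤ f (j + 1) := by
          have := ih (by omega)
          rwa [← hj] at this
        by_contra hcon
        push_neg at hcon
        -- then f j + 1 = f (j+1) = r exactly, an ascent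
        have hjk : j + 1 ≤ k := by omega
        have he : G.dist (p j) (p (j + 1)) = 1 := hadj1 j (by omega)
        have htriangle : f (j + 1) ≤ f j + 1 := by
          have h := hG.dist_triangle (u := u) (v := p j) (w := p (j + 1))
          simp only [hfdef]
          omega
        have hfj : f j + 1 = f (j + 1) := by omega
        -- α_i at (u, p j, p (j+1), y)
        have hI1 : Itv G u (p (j + 1)) (p j) := by
          unfold Itv
          simp only [hfdef] at hfj
          omega
        have hI2 : Itv G (p j) y (p (j + 1)) := by
          unfold Itv
          obtain ⟨_, hb⟩ := hposP j (by omega)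
          obtain ⟨_, hb'⟩ := hposP (j + 1) (by omega)
          omega
        have hcc := hα u (p j) (p (j + 1)) y hI1 hI2 (hadjP j (by omega))
        obtain ⟨_, hb⟩ := hposP j (by omega)
        -- d(u, p j) + d(p j, y) ≤ d(u,y) + i ≤ r + i with d(p j,y) = k - j, d(u,p j) ≥ r - 1
        simp only [hfdef] at *
        omega
  have hf0 : f 0 = r := by
    have h1 := hdown t le_rfl
    simp only [Nat.sub_self] at h1
    omega
  -- (b) upward: r ≤ f j for t ≤ j ≤ k
  have hup : ∀ m, t + m ≤ k → r ≤ f (t + m) := by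
    intro m
    induction m with
    | zero => intro _; simpa using hut
    | succ m ih =>
        intro hm
        have hidx : t + (m + 1) = (t + m) + 1 := by omega
        rw [hidx]
        set j := t + m with hjdef
        have hprev : r ≤ f j := ih (by omega)
        by_contra hcon
        push_neg at hcon
        have he : G.dist (p j) (p (j + 1)) = 1 := hadj1 j (by omega)
        have htriangle : f j ≤ f (j + 1) + 1 := by
          have h := hG.dist_triangle (u := u) (v := p (j + 1)) (w := p j)
          have hsym : G.dist (p (j + 1)) (p j) = 1 := by
            rw [SimpleGraph.dist_comm]; exact he
          simp only [hfdef]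
          omega
        -- descent: f (j+1) + 1 = f j
        have hdesc : f (j + 1) + 1 = f j := by omega
        have hI1 : Itv G u (p j) (p (j + 1)) := by
          unfold Itv
          have hsym : G.dist (p (j + 1)) (p j) = 1 := by
            rw [SimpleGraph.dist_comm]; exact he
          simp only [hfdef] at hdesc
          omega
        have hI2 : Itv G (p (j + 1)) x (p j) := by
          unfold Itv
          have hsym : G.dist (p (j + 1)) (p j) = 1 := by
            rw [SimpleGraph.dist_comm]; exact he
          obtain ⟨ha, _⟩ := hposP j (by omega)
          obtain ⟨ha', _⟩ := hposP (j + 1) (by omega)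
          have hc : G.dist (p j) x = j := by rw [SimpleGraph.dist_comm]; exact ha
          have hc' : G.dist (p (j + 1)) x = j + 1 := by
            rw [SimpleGraph.dist_comm]; exact ha'
          omega
        have hcc := hα u (p (j + 1)) (p j) x hI1 hI2 (hadjP j (by omega)).symm
        obtain ⟨ha, _⟩ := hposP j (by omega)
        have hc : G.dist (p j) x = j := by rw [SimpleGraph.dist_comm]; exact ha
        -- d(u, p (j+1)) + d(p (j+1), x) ≤ d(u,x) + i ≤ r + i  with j ≥ t = i+1 : contradiction
        obtain ⟨ha', _⟩ := hposP (j + 1) (by omega)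
        have hc' : G.dist (p (j + 1)) x = j + 1 := by rw [SimpleGraph.dist_comm]; exact ha'
        simp only [hfdef] at *
        omega
  -- (c) f j ≤ r for t ≤ j ≤ k  (downward induction from k)
  have hcap : ∀ m, m ≤ k - t → f (k - m) ≤ r := by
    intro m
    induction m with
    | zero => intro _; simpa using hfkle
    | succ m ih =>
        intro hm
        set j := k - (m + 1) with hjdef
        have hj1 : j + 1 = k - m := by omega
        have hjt : t ≤ j := by omega
        have hprev : f (j + 1) ≤ r := by
          have := ih (by omega)
          rwa [← hj1] at this
        by_contra hcon
        push_neg at hcon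
        -- f j ≥ r + 1; f (j+1) ≥ f j - 1 ≥ r and ≤ r so f (j+1) = r, descent
        have he : G.dist (p j) (p (j + 1)) = 1 := hadj1 j (by omega)
        have htriangle : f j ≤ f (j + 1) + 1 := by
          have h := hG.dist_triangle (u := u) (v := p (j + 1)) (w := p j)
          have hsym : G.dist (p (j + 1)) (p j) = 1 := by
            rw [SimpleGraph.dist_comm]; exact he
          simp only [hfdef]
          omega
        have hdesc : f (j + 1) + 1 = f j := by omega
        have hI1 : Itv G u (p j) (p (j + 1)) := by
          unfold Itv
          have hsym : G.dist (p (j + 1)) (p j) = 1 := by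
            rw [SimpleGraph.dist_comm]; exact he
          simp only [hfdef] at hdesc
          omega
        have hI2 : Itv G (p (j + 1)) x (p j) := by
          unfold Itv
          have hsym : G.dist (p (j + 1)) (p j) = 1 := by
            rw [SimpleGraph.dist_comm]; exact he
          obtain ⟨ha, _⟩ := hposP j (by omega)
          obtain ⟨ha', _⟩ := hposP (j + 1) (by omega)
          have hc : G.dist (p j) x = j := by rw [SimpleGraph.dist_comm]; exact ha
          have hc' : G.dist (p (j + 1)) x = j + 1 := by
            rw [SimpleGraph.dist_comm]; exact ha'
          omega
        have hcc := hα u (p (j + 1)) (p j) x hI1 hI2 (hadjP j (by omega)).symm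
        obtain ⟨ha', _⟩ := hposP (j + 1) (by omega)
        have hc' : G.dist (p (j + 1)) x = j + 1 := by rw [SimpleGraph.dist_comm]; exact ha'
        simp only [hfdef] at *
        omega
  -- combined flatness on [t, k]
  have hflat : ∀ j, t ≤ j → j ≤ k → f j = r := by
    intro j hj hjk
    have h1 : r ≤ f j := by
      have := hup (j - t) (by omega)
      have he : t + (j - t) = j := by omega
      rwa [he] at this
    have h2 : f j ≤ r := by
      have := hcap (k - j) (by omega)
      have he : k - (k - j) = j := by omega
      rwa [he] at this
    omega
  -- the vertex h1 adjacent to x on a geodesic from x to u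
  have hux : G.dist x u = r := by
    have : G.dist u (p 0) = r := hf0
    rw [hp0] at this
    rw [SimpleGraph.dist_comm]
    exact this
  obtain ⟨Q, hQ⟩ := hG.exists_walk_length_eq_dist x u
  have hQlen : Q.length = r := by rw [hQ, hux]
  have hr1 : 1 ≤ r := by omega
  have hQpos := geodesic_getVert hG Q hQ 1 (by omega)
  set h1 : V := Q.getVert 1 with hh1
  have hxh1 : G.dist x h1 = 1 := hQpos.1
  have hh1u : G.dist h1 u + 1 = r := by
    have := hQpos.2
    omega
  have huh1 : G.dist u h1 + 1 = r := by
    have : G.dist u h1 = G.dist h1 u := SimpleGraph.dist_comm ..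
    omega
  -- the chain of jumps of length i+1 along the path
  -- D j := d(h1, p ((i+1)*j)), jump: D (j+1) ≤ D j + i
  have hjump : ∀ a : ℕ, a + (i + 1) ≤ k → t ≤ a + (i + 1) → G.dist u (p a) = r →
      G.dist h1 (p (a + (i + 1))) ≤ G.dist h1 (p a) + i := by
    intro a hak hat hua
    by_contra hcon
    push_neg at hcon
    have hq1 : i + 1 ≤ G.dist (p a) (p (a + (i + 1))) := by
      obtain ⟨ha, _⟩ := hposP a (by omega)
      obtain ⟨ha', _⟩ := hposP (a + (i + 1)) (by omega)
      have htr : G.dist x (p (a + (i + 1))) ≤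
          G.dist x (p a) + G.dist (p a) (p (a + (i + 1))) := hG.dist_triangle
      omega
    have hq2 : G.dist (p a) (p (a + (i + 1))) ≤ i + 1 := hpair a (i + 1) (by omega)
    have htr : G.dist h1 (p (a + (i + 1))) ≤
        G.dist h1 (p a) + G.dist (p a) (p (a + (i + 1))) := hG.dist_triangle
    have halign : G.dist h1 (p (a + (i + 1))) =
        G.dist h1 (p a) + G.dist (p a) (p (a + (i + 1))) := by omega
    have huzle : G.dist u (p (a + (i + 1))) ≤ r := by
      have := hflat (a + (i + 1)) hat hak
      simp only [hfdef] at this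
      omega
    exact anchor_lemma hG hα (by omega : G.dist u h1 + 1 ≤ r) hua huzle
      (by omega) halign
  -- apply the jumps three times, starting from position 0
  have hD0 : G.dist h1 (p 0) = 1 := by
    rw [hp0, SimpleGraph.dist_comm]; exact hxh1
  have hu0 : G.dist u (p 0) = r := hf0
  have hu1 : G.dist u (p (i + 1)) = r := hflat (i + 1) le_rfl (by omega)
  have hu2 : G.dist u (p (2 * i + 2)) = r := hflat (2 * i + 2) (by omega) (by omega)
  have hs1 : G.dist h1 (p (0 + (i + 1))) ≤ G.dist h1 (p 0) + i :=
    hjump 0 (by omega) (by omega) hu0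
  have hs2 : G.dist h1 (p ((i + 1) + (i + 1))) ≤ G.dist h1 (p (i + 1)) + i := by
    have := hjump (i + 1) (by omega) (by omega) hu1
    exact this
  have hs3 : G.dist h1 (p ((2 * i + 2) + (i + 1))) ≤ G.dist h1 (p (2 * i + 2)) + i := by
    have := hjump (2 * i + 2) (by omega) (by omega) hu2
    exact this
  -- rewrite indices
  have e1 : 0 + (i + 1) = i + 1 := by omega
  have e2 : (i + 1) + (i + 1) = 2 * i + 2 := by omega
  have e3 : (2 * i + 2) + (i + 1) = 3 * i + 3 := by omega
  rw [e1] at hs1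
  rw [e2] at hs2
  rw [e3] at hs3
  -- final contradiction : d(x, p (3i+3)) = 3i+3 but ≤ 1 + (1 + 3i)
  obtain ⟨hfin, _⟩ := hposP (3 * i + 3) (by omega)
  have htr : G.dist x (p (3 * i + 3)) ≤ G.dist x h1 + G.dist h1 (p (3 * i + 3)) :=
    hG.dist_triangle
  omega
end

section
/- Let G be an α_i-metric graph and x,y a pair of mutually distant vertices. Then d(x,y) ≥ 2·rad(G)-4i-3 and d(x,y) ≥ diam(G)-3i-2. -/
open SimpleGraph

variable {V : Type*}

section Aux

variable {G : SimpleGraph V} {i : ℕ}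

/-- From a vertex at distance `m+1` from `y`, there is a neighbor at distance `m`. -/
private lemma step_toward_s8 (hG : G.Connected) {p y : V} {m : ℕ} (h : G.dist p y = m + 1) :
    ∃ r, G.Adj p r ∧ G.dist r y = m := by
  obtain ⟨w, hw⟩ := hG.exists_walk_length_eq_dist p y
  cases w with
  | nil =>
    rw [SimpleGraph.dist_self] at h; omega
  | cons hadj q =>
    rename_i b
    refine ⟨_, hadj, ?_⟩
    have h1 := SimpleGraph.dist_le q
    have h2 := hG.dist_triangle (u := p) (v := b) (w := y)
    have h3 : G.dist p b = 1 := SimpleGraph.dist_eq_one_iff_adj.mpr hadj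
    simp only [SimpleGraph.Walk.length_cons] at hw
    omega

/-- Existence of a point at prescribed position on a geodesic from `x` to `y`. -/
private lemma exists_mid (hG : G.Connected) (x y : V) :
    ∀ a b : ℕ, a + b = G.dist x y → ∃ p, G.dist x p = a ∧ G.dist p y = b := by
  intro a
  induction a with
  | zero =>
    intro b hb
    refine ⟨x, by simp [SimpleGraph.dist_self], by simpa using hb.symm⟩
  | succ a ih =>
    intro b hb
    obtain ⟨p, hxp, hpy⟩ := ih (b + 1) (by omega)
    obtain ⟨r, hadj, hry⟩ := step_toward_s8 hG hpy
    refine ⟨r, ?_, hry⟩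
    have t1 := hG.dist_triangle (u := x) (v := p) (w := r)
    have t2 := hG.dist_triangle (u := x) (v := r) (w := y)
    have hpr : G.dist p r = 1 := SimpleGraph.dist_eq_one_iff_adj.mpr hadj
    omega

/-- The `α_i` condition specialized to a one-step configuration. -/
private lemma alpha_step (hα : AlphaI G i) {u v w f : V} (hadj : G.Adj v w)
    (h1 : G.dist u v + 1 = G.dist u w) (h2 : G.dist w f + 1 = G.dist v f) :
    G.dist u v + G.dist v f ≤ G.dist u f + i := by
  have hvw : G.dist v w = 1 := SimpleGraph.dist_eq_one_iff_adj.mpr hadj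
  refine hα u v w f ?_ ?_ hadj
  · show G.dist u v + G.dist v w = G.dist u w
    omega
  · show G.dist v w + G.dist w f = G.dist v f
    omega

/-- SKEW follows from SLICE at the same level. -/
private lemma skew_of_slice (hG : G.Connected) (hα : AlphaI G i) (a : ℕ)
    (hsl : ∀ x y u v : V, G.dist x u = a → G.dist x v = a →
      G.dist x u + G.dist u y = G.dist x y → G.dist x v + G.dist v y = G.dist x y →
      G.dist u v ≤ i + 1) :
    ∀ x y u v : V, ∀ D : ℕ, G.dist x u = a → G.dist x v = a + D → 1 ≤ D →
      G.dist x u + G.dist u y = G.dist x y → G.dist x v + G.dist v y = G.dist x y →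
      G.dist u v ≤ D + i := by
  intro x y u v D hxu hxv hD hu hv
  obtain ⟨t, hxt, htv⟩ := exists_mid hG x v a D (by omega)
  -- t is the point at position a on a geodesic from x to v
  have t1 := hG.dist_triangle (u := t) (v := v) (w := y)
  have t2 := hG.dist_triangle (u := x) (v := t) (w := y)
  have hty : G.dist t y = D + G.dist v y := by omega
  have hint_t : G.dist x t + G.dist t y = G.dist x y := by omega
  have hm : G.dist u t ≤ i + 1 := hsl x y u t hxu hxt hu hint_t
  have t3 := hG.dist_triangle (u := u) (v := t) (w := v)
  by_contra hcon
  push_neg at hcon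
  -- then d u v = D + i + 1, d u t = i + 1, and t lies between u and v
  have hut : G.dist u t = i + 1 := by omega
  have huv : G.dist u v = G.dist u t + G.dist t v := by omega
  -- step from t toward v
  obtain ⟨D', hD'⟩ : ∃ D', D = D' + 1 := ⟨D - 1, by omega⟩
  obtain ⟨r, hadj, hrv⟩ := step_toward_s8 hG (show G.dist t v = D' + 1 by omega)
  have t4 := hG.dist_triangle (u := u) (v := t) (w := r)
  have t5 := hG.dist_triangle (u := u) (v := r) (w := v)
  have t6 := hG.dist_triangle (u := t) (v := r) (w := y)
  have t7 := hG.dist_triangle (u := r) (v := v) (w := y)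
  have htr : G.dist t r = 1 := SimpleGraph.dist_eq_one_iff_adj.mpr hadj
  have hur : G.dist u r = G.dist u t + 1 := by omega
  have hry : G.dist r y + 1 = G.dist t y := by omega
  have := alpha_step hα hadj hur.symm hry
  omega

/-- The key interval lemmas: joint SLICE/SKEW statement, by induction on the position. -/
private lemma slice_skew (hG : G.Connected) (hα : AlphaI G i) : ∀ a : ℕ,
    (∀ x y u v : V, G.dist x u = a → G.dist x v = a →
      G.dist x u + G.dist u y = G.dist x y → G.dist x v + G.dist v y = G.dist x y →
      G.dist u v ≤ i + 1) := by
  intro a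
  induction a with
  | zero =>
    intro x y u v hxu hxv _ _
    have hu : u = x := ((hG.dist_eq_zero_iff).mp hxu).symm
    have hv : v = x := ((hG.dist_eq_zero_iff).mp hxv).symm
    subst hu; subst hv
    simp [SimpleGraph.dist_self]
  | succ a ih =>
    intro x y u v hxu hxv hu hv
    by_contra hcon
    push_neg at hcon
    -- ℓ := d u v ≥ i + 2
    have hux : G.dist u x = a + 1 := by rw [SimpleGraph.dist_comm]; exact hxu
    obtain ⟨p, hadj, hpx⟩ := step_toward_s8 hG hux
    have hxp : G.dist x p = a := by rw [SimpleGraph.dist_comm]; exact hpx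
    have hup : G.dist u p = 1 := SimpleGraph.dist_eq_one_iff_adj.mpr hadj
    have hpu : G.dist p u = 1 := by rw [SimpleGraph.dist_comm]; exact hup
    have t1 := hG.dist_triangle (u := x) (v := p) (w := y)
    have t2 := hG.dist_triangle (u := p) (v := u) (w := y)
    have hpy : G.dist p y = G.dist u y + 1 := by omega
    have t3 := hG.dist_triangle (u := p) (v := u) (w := v)
    have t4 := hG.dist_triangle (u := u) (v := p) (w := v)
    -- case analysis on d p v ∈ {ℓ-1, ℓ, ℓ+1}
    rcases (show G.dist p v = G.dist u v + 1 ∨ G.dist p v = G.dist u v ∨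
        G.dist p v + 1 = G.dist u v by omega) with hc | hc | hc
    · -- d p v = ℓ + 1 : apply α with (x, p, u, v)
      have h1 : G.dist x p + 1 = G.dist x u := by omega
      have h2 : G.dist u v + 1 = G.dist p v := by omega
      have := alpha_step hα (hadj.symm) h1 h2
      omega
    · -- d p v = ℓ : contradict SKEW at level a with the pair (p, v)
      have hint_p : G.dist x p + G.dist p y = G.dist x y := by omega
      have := skew_of_slice hG hα a ih x y p v 1 hxp (by omega) (by omega) hint_p hv
      omega
    · -- d p v = ℓ - 1 : apply α with (v, p, u, y)
      have hvp : G.dist v p = G.dist p v := SimpleGraph.dist_comm ..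
      have hvu : G.dist v u = G.dist u v := SimpleGraph.dist_comm ..
      have h1 : G.dist v p + 1 = G.dist v u := by omega
      have h2 : G.dist u y + 1 = G.dist p y := by omega
      have := alpha_step hα hadj.symm h1 h2
      omega

/-- The descending chain: from any interval point `v` at position `(a,b)`, either the chain
reaches `u`, or there is a same-position interval point `q` with a trigger inequality. -/
private lemma gate (hG : G.Connected) (hα : AlphaI G i) (x y u : V) (k a b : ℕ)
    (hxy : G.dist x y = k) (hab : a + b = k) :
    ∀ n : ℕ, ∀ v : V, G.dist x v = a → G.dist y v = b → G.dist v u = n →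
    ∃ q, G.dist x q = a ∧ G.dist y q = b ∧
      (q = u ∨ G.dist q u + a ≤ G.dist u x + i ∨ G.dist q u + b ≤ G.dist u y + i) := by
  intro n
  induction n with
  | zero =>
    intro v hxv hyv hvu
    exact ⟨v, hxv, hyv, Or.inl ((hG.dist_eq_zero_iff).mp hvu)⟩
  | succ n ih =>
    intro v hxv hyv hvu
    obtain ⟨r, hadj, hru⟩ := step_toward_s8 hG hvu
    have hvr : G.dist v r = 1 := SimpleGraph.dist_eq_one_iff_adj.mpr hadj
    have t1 := hG.dist_triangle (u := x) (v := v) (w := r)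
    have t2 := hG.dist_triangle (u := x) (v := r) (w := v)
    have t3 := hG.dist_triangle (u := y) (v := v) (w := r)
    have t4 := hG.dist_triangle (u := y) (v := r) (w := v)
    have hrv : G.dist r v = 1 := by rw [SimpleGraph.dist_comm]; exact hvr
    by_cases hxr : G.dist x r = a + 1
    · -- trigger toward x
      refine ⟨v, hxv, hyv, Or.inr (Or.inl ?_)⟩
      have h1 : G.dist x v + 1 = G.dist x r := by omega
      have h2 : G.dist r u + 1 = G.dist v u := by omega
      have := alpha_step hα hadj h1 h2
      have hc1 : G.dist x v = G.dist v x := SimpleGraph.dist_comm ..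
      have hc2 : G.dist x u = G.dist u x := SimpleGraph.dist_comm ..
      have hc3 : G.dist v u = G.dist u v := SimpleGraph.dist_comm ..
      -- conclusion : d x v + d v u ≤ d x u + i
      omega
    · by_cases hyr : G.dist y r = b + 1
      · -- trigger toward y
        refine ⟨v, hxv, hyv, Or.inr (Or.inr ?_)⟩
        have h1 : G.dist y v + 1 = G.dist y r := by omega
        have h2 : G.dist r u + 1 = G.dist v u := by omega
        have := alpha_step hα hadj h1 h2
        have hc2 : G.dist y u = G.dist u y := SimpleGraph.dist_comm ..
        omega
      · -- r stays at position (a, b); recurse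
        have t5 := hG.dist_triangle (u := x) (v := r) (w := y)
        have hry : G.dist r y = G.dist y r := SimpleGraph.dist_comm ..
        have hxr' : G.dist x r = a := by omega
        have hyr' : G.dist y r = b := by omega
        exact ih r hxr' hyr' hru

/-- The eccentricity-type lemma `E*`. -/
private lemma Estar (hG : G.Connected) (hα : AlphaI G i) (x y v u : V) (k a b : ℕ)
    (hxy : G.dist x y = k) (hab : a + b = k)
    (hxv : G.dist x v = a) (hyv : G.dist y v = b) :
    G.dist u v + a ≤ G.dist u x + 2 * i + 1 ∨ G.dist u v + b ≤ G.dist u y + 2 * i + 1 := by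
  obtain ⟨q, hxq, hyq, hq⟩ := gate hG hα x y u k a b hxy hab (G.dist v u) v hxv hyv rfl
  have hvy : G.dist v y = b := by rw [SimpleGraph.dist_comm]; exact hyv
  have hqy : G.dist q y = b := by rw [SimpleGraph.dist_comm]; exact hyq
  have hslice : G.dist v q ≤ i + 1 :=
    slice_skew hG hα a x y v q hxv hxq (by omega) (by omega)
  have t1 := hG.dist_triangle (u := u) (v := q) (w := v)
  have hc1 : G.dist q v = G.dist v q := SimpleGraph.dist_comm ..
  have hc2 : G.dist u q = G.dist q u := SimpleGraph.dist_comm ..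
  rcases hq with hq | hq | hq
  · -- q = u : then u is at position (a,b), use SLICE
    have h4 : G.dist q u = 0 := by rw [hq, SimpleGraph.dist_self]
    have h3 : G.dist u x = a := by rw [← hq, SimpleGraph.dist_comm]; exact hxq
    left; omega
  · left
    have hux : G.dist u x = G.dist x u := SimpleGraph.dist_comm ..
    omega
  · right; omega

end Aux

theorem stmt_8 [Fintype V] [Nonempty V] (G : SimpleGraph V) (hG : G.Connected) (i : ℕ)
    (hα : AlphaI G i) (x y : V)
    (hx : ecc G x = G.dist x y) (hy : ecc G y = G.dist x y) :
    2 * grad G ≤ G.dist x y + 4 * i + 3 ∧ gdiam G ≤ G.dist x y + 3 * i + 2 := by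
  simp only [ecc] at hx hy
  set k := G.dist x y with hk
  have hmx : ∀ w, G.dist x w ≤ k := by
    intro w
    calc G.dist x w ≤ Finset.univ.sup (fun u => G.dist x u) :=
          Finset.le_sup (Finset.mem_univ w)
      _ = k := hx
  have hmy : ∀ w, G.dist y w ≤ k := by
    intro w
    calc G.dist y w ≤ Finset.univ.sup (fun u => G.dist y u) :=
          Finset.le_sup (Finset.mem_univ w)
      _ = k := hy
  constructor
  · -- radius bound via the near-middle point
    obtain ⟨c, hxc, hcy⟩ := exists_mid hG x y (k - k / 2) (k / 2) (by omega)
    have hyc : G.dist y c = k / 2 := by rw [SimpleGraph.dist_comm]; exact hcy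
    have hecc : ecc G c ≤ (k - k / 2) + 2 * i + 1 := by
      simp only [ecc]
      apply Finset.sup_le
      intro z _
      have hE := Estar hG hα x y c z k (k - k / 2) (k / 2) hk.symm (by omega) hxc hyc
      have h1 : G.dist z x ≤ k := by rw [SimpleGraph.dist_comm]; exact hmx z
      have h2 : G.dist z y ≤ k := by rw [SimpleGraph.dist_comm]; exact hmy z
      have h3 : G.dist c z = G.dist z c := SimpleGraph.dist_comm ..
      omega
    have hgrad : grad G ≤ ecc G c := by
      simp only [grad]
      exact Finset.inf'_le _ (Finset.mem_univ c)
    omega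
  · -- diameter bound
    simp only [gdiam]
    apply Finset.sup_le
    intro u _
    simp only [ecc]
    apply Finset.sup_le
    intro z _
    -- notation
    have hA : G.dist u x ≤ k := by rw [SimpleGraph.dist_comm]; exact hmx u
    have hB : G.dist u y ≤ k := by rw [SimpleGraph.dist_comm]; exact hmy u
    have hzx : G.dist z x ≤ k := by rw [SimpleGraph.dist_comm]; exact hmx z
    have hzy : G.dist z y ≤ k := by rw [SimpleGraph.dist_comm]; exact hmy z
    -- balanced position
    set A := G.dist u x with hA'
    set B := G.dist u y with hB'
    set α := (k + A - B + 1) / 2 with hα'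
    have hα1 : k + A - B ≤ 2 * α ∧ 2 * α ≤ k + A - B + 1 := by omega
    have hαk : α ≤ k := by omega
    obtain ⟨v, hxv, hvy⟩ := exists_mid hG x y α (k - α) (by omega)
    have hyv : G.dist y v = k - α := by rw [SimpleGraph.dist_comm]; exact hvy
    obtain ⟨q, hxq, hyq, hq⟩ :=
      gate hG hα x y z k α (k - α) hk.symm (by omega) (G.dist v z) v hxv hyv rfl
    have hE := Estar hG hα x y q u k α (k - α) hk.symm (by omega) hxq hyq
    have t1 := hG.dist_triangle (u := u) (v := q) (w := z)
    have hc1 : G.dist q z = G.dist z q := SimpleGraph.dist_comm ..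
    have hc2 : G.dist q u = G.dist u q := SimpleGraph.dist_comm ..
    rcases hq with hq | hq | hq
    · -- q = z : E* applies directly to z
      have h4 : G.dist q z = 0 := by rw [hq, SimpleGraph.dist_self]
      omega
    · -- trigger toward x : d q z + α ≤ d z x + i
      omega
    · -- trigger toward y
      omega
end

section
/- Let G be an α_1-metric graph and v a vertex with locality 2 (i.e., no neighbor of v has smaller eccentricity, but some vertex at distance 2 does). Then e(v) ≤ rad(G)+2; moreover, if e(v)=rad(G)+2 then diam(G)=2·rad(G). -/
open SimpleGraph

variable {V : Type*}

section Helpers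

variable {G : SimpleGraph V}

lemma alpha1 (hα : AlphaI G 1) {a b c e : V}
    (h1 : G.dist a b + G.dist b c = G.dist a c)
    (h2 : G.dist b c + G.dist c e = G.dist b e) (hadj : G.Adj b c) :
    G.dist a b + G.dist b e ≤ G.dist a e + 1 :=
  hα a b c e h1 h2 hadj

lemma adj_dist {a b : V} (h : G.Adj a b) : G.dist a b = 1 :=
  (SimpleGraph.dist_eq_one_iff_adj).2 h

lemma exists_step_s15 (hG : G.Connected) {u y : V} {n : ℕ} (h : G.dist u y = n + 1) :
    ∃ w, G.Adj u w ∧ G.dist w y = n := by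
  obtain ⟨p, hp⟩ := hG.exists_walk_length_eq_dist u y
  cases p with
  | nil => rw [SimpleGraph.Walk.length_nil] at hp; omega
  | @cons _ w _ hadj q =>
    rw [SimpleGraph.Walk.length_cons] at hp
    have h1 : G.dist w y ≤ n := by
      have := SimpleGraph.dist_le q
      omega
    have h2 : G.dist u y ≤ G.dist u w + G.dist w y := hG.dist_triangle
    have h3 : G.dist u w = 1 := adj_dist hadj
    exact ⟨w, hadj, by omega⟩

lemma crossing (P : ℕ → Prop) : ∀ n : ℕ, ¬ P 0 → P n → ∃ j, j < n ∧ ¬ P j ∧ P (j+1) := by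
  intro n
  induction n with
  | zero => intro h0 hn; exact absurd hn h0
  | succ n ih =>
    intro h0 hn
    by_cases h : P n
    · obtain ⟨j, hj, h1, h2⟩ := ih h0 h
      exact ⟨j, by omega, h1, h2⟩
    · exact ⟨n, by omega, h, hn⟩

end Helpers
section S1sec

variable {G : SimpleGraph V}

lemma S1 (hG : G.Connected) (hα : AlphaI G 1) :
    ∀ B : ℕ, 2 ≤ B → ∀ (A : ℕ) (u x v y : V), G.Adj x v → G.dist u x = A →
      G.dist u v = A + 1 → G.dist v y = B → G.dist x y = B + 1 → G.dist u y = A + B →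
      ∃ y', G.Adj y y' ∧ G.dist v y' + 1 = B ∧ G.dist u y' + 1 = A + B := by
  intro B hB
  induction B, hB using Nat.le_induction with
  | base =>
    intro A u x v y hxv hux huv hvy hxy huy
    have tri : ∀ a b c : V, G.dist a c ≤ G.dist a b + G.dist b c := fun _ _ _ => hG.dist_triangle
    have hxv1 : G.dist x v = 1 := adj_dist hxv
    have hvx1 : G.dist v x = 1 := by rw [G.dist_comm]; exact hxv1
    have hvu : G.dist v u = A + 1 := by rw [G.dist_comm]; exact huv
    have hxu : G.dist x u = A := by rw [G.dist_comm]; exact hux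
    -- y' : neighbor of y toward v
    have hyv : G.dist y v = 1 + 1 := by rw [G.dist_comm]; omega
    obtain ⟨y', hyy', hy'v⟩ := exists_step_s15 hG hyv
    have hvy' : G.dist v y' = 1 := by rw [G.dist_comm]; exact hy'v
    have hyy'1 : G.dist y y' = 1 := adj_dist hyy'
    have hy'y1 : G.dist y' y = 1 := by rw [G.dist_comm]; exact hyy'1
    have hxy' : G.dist x y' = 2 := by
      have h1 := tri x v y'
      have h2 := tri x y' y
      omega
    have huy'ub : G.dist u y' ≤ A + 2 := by have := tri u v y'; omega
    have huy'lb : A + 1 ≤ G.dist u y' := by have := tri u y' y; omega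
    by_cases hcase : G.dist u y' = A + 1
    · exact ⟨y', hyy', by omega, by omega⟩
    have huy'2 : G.dist u y' = A + 2 := by omega
    -- e (η) : neighbor of y toward u
    have hyu : G.dist y u = (A + 1) + 1 := by rw [G.dist_comm]; omega
    obtain ⟨e, hye, heu⟩ := exists_step_s15 hG hyu
    have hue : G.dist u e = A + 1 := by rw [G.dist_comm]; exact heu
    have hye1 : G.dist y e = 1 := adj_dist hye
    have hey1 : G.dist e y = 1 := by rw [G.dist_comm]; exact hye1
    have hveub : G.dist v e ≤ 3 := by have := tri v y e; omega
    by_cases hve1 : G.dist v e = 1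
    · exact ⟨e, hye, by omega, by omega⟩
    have hve : G.dist v e = 2 := by
      have hvelb : 1 ≤ G.dist v e := by
        rcases Nat.eq_zero_or_pos (G.dist v e) with h0 | h1
        · exfalso
          have : v = e := (hG.dist_eq_zero_iff).1 h0
          subst this
          omega
        · omega
      rcases (by omega : G.dist v e = 2 ∨ G.dist v e = 3) with h | h
      · exact h
      · exfalso
        have i1 : G.dist v y + G.dist y e = G.dist v e := by omega
        have i2 : G.dist y e + G.dist e u = G.dist y u := by omega
        have := alpha1 hα i1 i2 hye
        omega
    exfalso
    -- d x e = 2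
    have hev : G.dist e v = 2 := by rw [G.dist_comm]; exact hve
    have hxe : G.dist x e = 2 := by
      have hub : G.dist x e ≤ 3 := by have := tri x v e; omega
      have hlb : 1 ≤ G.dist x e := by
        rcases Nat.eq_zero_or_pos (G.dist x e) with h0 | h1
        · exfalso
          have : x = e := (hG.dist_eq_zero_iff).1 h0
          subst this
          omega
        · omega
      rcases (by omega : G.dist x e = 1 ∨ G.dist x e = 2 ∨ G.dist x e = 3) with h | h | h
      · exfalso
        have hex1 : G.dist e x = 1 := by rw [G.dist_comm]; exact h
        have i1 : G.dist e x + G.dist x v = G.dist e v := by omega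
        have i2 : G.dist x v + G.dist v y = G.dist x y := by omega
        have := alpha1 hα i1 i2 hxv
        have hey' : G.dist e y = 1 := hey1
        omega
      · exact h
      · exfalso
        have i1 : G.dist u x + G.dist x v = G.dist u v := by omega
        have i2 : G.dist x v + G.dist v e = G.dist x e := by omega
        have := alpha1 hα i1 i2 hxv
        omega
    -- d y' e ∈ {1,2} and both impossible
    have hy'ne : y' ≠ e := by
      intro hc; subst hc; omega
    have hy'e_ub : G.dist y' e ≤ 2 := by have := tri y' y e; omega
    have hy'e_lb : 1 ≤ G.dist y' e := by
      rcases Nat.eq_zero_or_pos (G.dist y' e) with h0 | h1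
      · exact absurd ((hG.dist_eq_zero_iff).1 h0) hy'ne
      · omega
    have hvy'adj : G.Adj v y' := (SimpleGraph.dist_eq_one_iff_adj).1 hvy'
    rcases (by omega : G.dist y' e = 1 ∨ G.dist y' e = 2) with h | h
    · have i1 : G.dist u v + G.dist v y' = G.dist u y' := by omega
      have i2 : G.dist v y' + G.dist y' e = G.dist v e := by omega
      have := alpha1 hα i1 i2 hvy'adj
      omega
    · have hey' : G.dist e y' = 2 := by rw [G.dist_comm]; exact h
      have hy'x : G.dist y' x = 2 := by rw [G.dist_comm]; exact hxy'
      have hyx : G.dist y x = 3 := by rw [G.dist_comm]; exact hxy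
      have i1 : G.dist e y + G.dist y y' = G.dist e y' := by omega
      have i2 : G.dist y y' + G.dist y' x = G.dist y x := by omega
      have := alpha1 hα i1 i2 hyy'
      have hex2 : G.dist e x = 2 := by rw [G.dist_comm]; exact hxe
      omega
  | succ n hn ih =>
    intro A u x v y hxv hux huv hvy hxy huy
    obtain ⟨m, rfl⟩ : ∃ m, n = m + 2 := ⟨n - 2, by omega⟩
    have tri : ∀ a b c : V, G.dist a c ≤ G.dist a b + G.dist b c := fun _ _ _ => hG.dist_triangle
    have hxv1 : G.dist x v = 1 := adj_dist hxv
    -- y* : neighbor of y toward v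
    have hyv : G.dist y v = (m + 2) + 1 := by rw [G.dist_comm]; omega
    obtain ⟨y1, hyy1, hy1v⟩ := exists_step_s15 hG hyv
    have hvy1 : G.dist v y1 = m + 2 := by rw [G.dist_comm]; exact hy1v
    have hyy1d : G.dist y y1 = 1 := adj_dist hyy1
    have hy1y : G.dist y1 y = 1 := by rw [G.dist_comm]; exact hyy1d
    have huy1ub : G.dist u y1 ≤ A + m + 3 := by have := tri u v y1; omega
    have huy1lb : A + m + 2 ≤ G.dist u y1 := by have := tri u y1 y; omega
    by_cases hcase : G.dist u y1 = A + m + 2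
    · exact ⟨y1, hyy1, by omega, by omega⟩
    have huy1 : G.dist u y1 = A + m + 3 := by omega
    -- v1 : neighbor of v toward y1
    have hvy1' : G.dist v y1 = (m + 1) + 1 := by omega
    obtain ⟨v1, hvv1, hv1y1⟩ := exists_step_s15 hG hvy1'
    have hvv1d : G.dist v v1 = 1 := adj_dist hvv1
    have huv1 : G.dist u v1 = A + 2 := by
      have hub : G.dist u v1 ≤ A + 2 := by have := tri u v v1; omega
      have hlb : A + 2 ≤ G.dist u v1 := by have := tri u v1 y1; omega
      omega
    have hv1y : G.dist v1 y = m + 2 := by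
      have hub : G.dist v1 y ≤ m + 2 := by have := tri v1 y1 y; omega
      have hlb : m + 2 ≤ G.dist v1 y := by have := tri v v1 y; omega
      omega
    -- apply IH to (A+1, u, v, v1, y)
    obtain ⟨y', hyy', h1, h2⟩ := ih (A + 1) u v v1 y hvv1 huv huv1 hv1y (by omega) (by omega)
    refine ⟨y', hyy', ?_, by omega⟩
    have hub : G.dist v y' ≤ m + 2 := by have := tri v v1 y'; omega
    have hlb : m + 2 ≤ G.dist v y' := by
      have := tri v y' y
      have hy'y : G.dist y' y = 1 := by rw [G.dist_comm]; exact adj_dist hyy'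
      omega
    omega

end S1sec
section L1sec

variable {G : SimpleGraph V}

/-- The `A = 1` case of the Yushmanov–Chepoi lemma: given `u ~ p ~ q` with
`d(u,q) = 2` and a vertex `y` with `d(q,y) = B`, `d(p,y) = d(u,y) = B+1`,
there is a neighbor `q'` of `q` one step closer to `y` with `d(u,q') = 2`. -/
lemma L1 (hG : G.Connected) (hα : AlphaI G 1) :
    ∀ B : ℕ, 1 ≤ B → ∀ u p q y : V, G.Adj p q → G.dist u p = 1 → G.dist u q = 2 →
      G.dist q y = B → G.dist p y = B + 1 → G.dist u y = B + 1 →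
      ∃ q', G.Adj q q' ∧ G.dist q' y + 1 = B ∧ G.dist u q' = 2 := by
  intro B hB
  induction B, hB using Nat.le_induction with
  | base =>
    intro u p q y hpq hup huq hqy hpy huy
    have hqyadj : G.Adj q y := (SimpleGraph.dist_eq_one_iff_adj).1 hqy
    exact ⟨y, hqyadj, by rw [SimpleGraph.dist_self], by omega⟩
  | succ n hn ih =>
    intro u p q y hpq hup huq hqy hpy huy
    have tri : ∀ a b c : V, G.dist a c ≤ G.dist a b + G.dist b c := fun _ _ _ => hG.dist_triangle
    obtain ⟨y', hyy', h1, h2⟩ :=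
      S1 hG hα (n + 1) (by omega) 1 u p q y hpq hup (by omega) hqy (by omega) (by omega)
    have hqy' : G.dist q y' = n := by omega
    have huy' : G.dist u y' = n + 1 := by omega
    have hpy' : G.dist p y' = n + 1 := by
      have hpq1 : G.dist p q = 1 := adj_dist hpq
      have hub : G.dist p y' ≤ n + 1 := by have := tri p q y'; omega
      have hy'y : G.dist y' y = 1 := by rw [G.dist_comm]; exact adj_dist hyy'
      have hlb : n + 1 ≤ G.dist p y' := by have := tri p y' y; omega
      omega
    obtain ⟨q', hqq', h3, h4⟩ := ih u p q y' hpq hup huq hqy' hpy' huy'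
    refine ⟨q', hqq', ?_, h4⟩
    have hy'y : G.dist y' y = 1 := by rw [G.dist_comm]; exact adj_dist hyy'
    have hub : G.dist q' y ≤ n := by have := tri q' y' y; omega
    have hqq'1 : G.dist q q' = 1 := adj_dist hqq'
    have hlb : n ≤ G.dist q' y := by have := tri q q' y; omega
    omega

end L1sec
section Chain

variable {G : SimpleGraph V}

/-- Invariant of stage `j` of the chain construction. -/
def chainInv (G : SimpleGraph V) (v : V) (k : ℕ) (xs ss : ℕ → V) (j : ℕ) : Prop :=
  G.dist v (xs j) = 2 ∧ G.dist v (xs (j+1)) = 2 ∧ G.Adj (xs j) (xs (j+1)) ∧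
  G.dist v (ss j) = k ∧ G.dist (xs j) (ss j) + 1 = k ∧ G.dist (xs (j+1)) (ss j) + 2 = k

lemma chains (hG : G.Connected) (hα : AlphaI G 1) (v x : V) (kk : ℕ)
    (hvx : G.dist v x = 2)
    (hvu : ∀ u : V, G.dist v u ≤ kk + 3)
    (hnb : ∀ w : V, G.Adj v w → ∃ s, kk + 3 ≤ G.dist w s)
    (hex : ∀ s : V, G.dist x s + 1 ≤ kk + 3)
    (CH : ∀ a b : V, ¬ (2 * (kk + 3) ≤ G.dist a b + 4)) :
    ∀ n : ℕ, ∃ xs ss : ℕ → V, xs 0 = x ∧ ∀ j, j < n → chainInv G v (kk+3) xs ss j := by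
  have tri : ∀ a b c : V, G.dist a c ≤ G.dist a b + G.dist b c := fun _ _ _ => hG.dist_triangle
  intro n
  induction n with
  | zero => exact ⟨fun _ => x, fun _ => x, rfl, by omega⟩
  | succ n ih =>
    obtain ⟨xs, ss, hx0, hinv⟩ := ih
    have hxn2 : G.dist v (xs n) = 2 := by
      cases n with
      | zero => rw [hx0]; exact hvx
      | succ p => exact (hinv p (by omega)).2.1
    -- midpoint m
    obtain ⟨m, hvm, hmxn⟩ := exists_step_s15 hG (show G.dist v (xs n) = 1 + 1 from by omega)
    have hmadj : G.Adj m (xs n) := (SimpleGraph.dist_eq_one_iff_adj).1 hmxn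
    have hvm1 : G.dist v m = 1 := adj_dist hvm
    have hmv1 : G.dist m v = 1 := by rw [G.dist_comm]; exact hvm1
    -- far vertex s of m
    obtain ⟨s, hks⟩ := hnb m hvm
    have hvs_ub : G.dist v s ≤ kk + 3 := hvu s
    have hsv : G.dist s v = G.dist v s := by rw [G.dist_comm]
    have hsm : G.dist s m = G.dist m s := by rw [G.dist_comm]
    have hms_ub : G.dist m s ≤ G.dist v s + 1 := by have := tri m v s; omega
    -- key facts about the previous target (for n ≥ 1)
    have hprev : n = 0 ∨ (1 ≤ n ∧ G.dist v (ss (n-1)) = kk + 3 ∧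
        G.dist (xs n) (ss (n-1)) + 2 = kk + 3 ∧ G.dist m (ss (n-1)) + 1 = kk + 3) := by
      cases n with
      | zero => exact Or.inl rfl
      | succ p =>
        right
        have hj := hinv p (by omega)
        have h4 : G.dist v (ss p) = kk + 3 := hj.2.2.2.1
        have h6 : G.dist (xs (p+1)) (ss p) + 2 = kk + 3 := hj.2.2.2.2.2
        have hm_ub : G.dist m (ss p) ≤ kk + 2 := by have := tri m (xs (p+1)) (ss p); omega
        have hm_lb : kk + 2 ≤ G.dist m (ss p) := by have := tri v m (ss p); omega
        simp only [Nat.add_sub_cancel]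
        exact ⟨by omega, h4, h6, by omega⟩
    -- Case (a): d m s = d v s + 1  → contradiction
    by_cases hsa : G.dist m s = G.dist v s + 1
    · exfalso
      have i1 : G.dist s v + G.dist v m = G.dist s m := by omega
      rcases hprev with h0 | ⟨hn1, hp4, hp6, hpm⟩
      · -- use x
        subst h0
        have hmx : G.dist m (xs 0) = 1 := hmxn
        have i2 : G.dist v m + G.dist m (xs 0) = G.dist v (xs 0) := by omega
        have := alpha1 hα i1 i2 hvm
        have hxs : G.dist (xs 0) s + 1 ≤ kk + 3 := by rw [hx0]; exact hex s
        have hcomm : G.dist s (xs 0) = G.dist (xs 0) s := by rw [G.dist_comm]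
        omega
      · -- use previous target
        have i2 : G.dist v m + G.dist m (ss (n-1)) = G.dist v (ss (n-1)) := by omega
        have := alpha1 hα i1 i2 hvm
        exact CH s (ss (n-1)) (by omega)
    -- Case (b): d v s = d m s = kk+3
    have hvs : G.dist v s = kk + 3 := by omega
    have hms : G.dist m s = kk + 3 := by omega
    -- bounds for d (xs n) s
    have hxnm : G.dist (xs n) m = 1 := by rw [G.dist_comm]; exact hmxn
    have hxns_ub : G.dist (xs n) s ≤ kk + 4 := by have := tri (xs n) m s; omega
    have hxns_lb : kk + 2 ≤ G.dist (xs n) s := by have := tri m (xs n) s; omega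
    have hxns_tri : G.dist (xs n) s = kk + 4 ∨ G.dist (xs n) s = kk + 3 ∨ G.dist (xs n) s = kk + 2 := by omega
    -- establish d (xs n) s = kk + 2  (cases b-i, b-ii excluded)
    have hxns : G.dist (xs n) s = kk + 2 := by
      rcases hprev with h0 | ⟨hn1, hp4, hp6, hpm⟩
      · -- n = 0 : forced by hex
        subst h0
        have hxs : G.dist (xs 0) s + 1 ≤ kk + 3 := by rw [hx0]; exact hex s
        omega
      · rcases hxns_tri with hbi | hbii | hbiii
        · -- (b-i)
          exfalso
          have hmxns : G.dist m (xs n) = 1 := hmxn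
          have i1 : G.dist s m + G.dist m (xs n) = G.dist s (xs n) := by
            have : G.dist s (xs n) = G.dist (xs n) s := by rw [G.dist_comm]
            omega
          have i2 : G.dist m (xs n) + G.dist (xs n) (ss (n-1)) = G.dist m (ss (n-1)) := by omega
          have := alpha1 hα i1 i2 hmadj
          exact CH s (ss (n-1)) (by omega)
        · -- (b-ii) : descent
          exfalso
          have hP0 : ¬ (kk + 3 ≤ G.dist s (xs 0)) := by
            have hxs : G.dist x s + 1 ≤ kk + 3 := hex s
            have : G.dist s (xs 0) = G.dist x s := by rw [hx0, G.dist_comm]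
            omega
          have hPn : kk + 3 ≤ G.dist s (xs n) := by
            have : G.dist s (xs n) = G.dist (xs n) s := by rw [G.dist_comm]
            omega
          obtain ⟨j, hjn, hPj, hPj1⟩ := crossing (fun j => kk + 3 ≤ G.dist s (xs j)) n hP0 hPn
          have hj := hinv j hjn
          have hadjj : G.Adj (xs j) (xs (j+1)) := hj.2.2.1
          have hdj1 : G.dist (xs j) (xs (j+1)) = 1 := adj_dist hadjj
          have hub : G.dist s (xs (j+1)) ≤ G.dist s (xs j) + 1 := by
            have := tri s (xs j) (xs (j+1)); omega
          have hsxj : G.dist s (xs j) + 1 = kk + 3 := by omega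
          have hsxj1 : G.dist s (xs (j+1)) = kk + 3 := by omega
          have i1 : G.dist s (xs j) + G.dist (xs j) (xs (j+1)) = G.dist s (xs (j+1)) := by omega
          have i2 : G.dist (xs j) (xs (j+1)) + G.dist (xs (j+1)) (ss j) = G.dist (xs j) (ss j) := by
            have h5 : G.dist (xs j) (ss j) + 1 = kk + 3 := hj.2.2.2.2.1
            have h6 : G.dist (xs (j+1)) (ss j) + 2 = kk + 3 := hj.2.2.2.2.2
            omega
          have := alpha1 hα i1 i2 hadjj
          have h5 : G.dist (xs j) (ss j) + 1 = kk + 3 := hj.2.2.2.2.1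
          exact CH s (ss j) (by omega)
        · exact hbiii
    -- Case (b-iii): build next stage via L1
    obtain ⟨x', hx'adj, hx's, hvx'⟩ :=
      L1 hG hα (kk + 2) (by omega) v m (xs n) s hmadj hvm1 hxn2 (by omega) hms hvs
    refine ⟨Function.update xs (n+1) x', Function.update ss n s, ?_, ?_⟩
    · rw [Function.update_of_ne (by omega)]; exact hx0
    · intro j hj
      rcases (by omega : j < n ∨ j = n) with hlt | rfl
      · have hold := hinv j hlt
        unfold chainInv at hold ⊢
        rw [Function.update_of_ne (show j ≠ n+1 by omega),
            Function.update_of_ne (show j+1 ≠ n+1 by omega),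
            Function.update_of_ne (show j ≠ n by omega)]
        exact hold
      · unfold chainInv
        simp only [Function.update_self,
          Function.update_of_ne (show j ≠ j + 1 from by omega)]
        exact ⟨hxn2, hvx', hx'adj, hvs, by omega, by omega⟩

end Chain
section NoCH

variable {G : SimpleGraph V}

lemma noCH [Fintype V] (hG : G.Connected) (hα : AlphaI G 1) (v x : V) (kk : ℕ)
    (hvx : G.dist v x = 2)
    (hvu : ∀ u : V, G.dist v u ≤ kk + 3)
    (hnb : ∀ w : V, G.Adj v w → ∃ s, kk + 3 ≤ G.dist w s)
    (hex : ∀ s : V, G.dist x s + 1 ≤ kk + 3)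
    (CH : ∀ a b : V, ¬ (2 * (kk + 3) ≤ G.dist a b + 4)) : False := by
  have tri : ∀ a b c : V, G.dist a c ≤ G.dist a b + G.dist b c := fun _ _ _ => hG.dist_triangle
  obtain ⟨xs, ss, hx0, hinv⟩ := chains hG hα v x kk hvx hvu hnb hex CH (Fintype.card V + 1)
  -- propagation: for j < l < N, dist (ss j) (xs l) = kk+1
  have prop : ∀ l, l < Fintype.card V + 1 → ∀ j, j < l →
      G.dist (ss j) (xs l) + 2 = kk + 3 := by
    intro l
    induction l with
    | zero => intro _ j hj; omega
    | succ l ihl =>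
      intro hlN j hjl
      rcases (by omega : j = l ∨ j < l) with rfl | hjl'
      · have hj := hinv j (by omega)
        have h6 : G.dist (xs (j+1)) (ss j) + 2 = kk + 3 := hj.2.2.2.2.2
        have : G.dist (ss j) (xs (j+1)) = G.dist (xs (j+1)) (ss j) := by rw [G.dist_comm]
        omega
      · have ih := ihl (by omega) j hjl'
        have hl := hinv l (by omega)
        have hadj : G.Adj (xs l) (xs (l+1)) := hl.2.2.1
        have hd1 : G.dist (xs l) (xs (l+1)) = 1 := adj_dist hadj
        have hub : G.dist (ss j) (xs (l+1)) ≤ kk + 2 := by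
          have := tri (ss j) (xs l) (xs (l+1)); omega
        have hlb : kk + 1 ≤ G.dist (ss j) (xs (l+1)) := by
          have h4 : G.dist v (ss j) = kk + 3 := (hinv j (by omega)).2.2.2.1
          have h2 : G.dist v (xs (l+1)) = 2 := hl.2.1
          have hcm : G.dist (xs (l+1)) (ss j) = G.dist (ss j) (xs (l+1)) := by rw [G.dist_comm]
          have := tri v (xs (l+1)) (ss j)
          omega
        rcases (by omega : G.dist (ss j) (xs (l+1)) = kk + 1 ∨
            G.dist (ss j) (xs (l+1)) = kk + 2) with h | h
        · omega
        · exfalso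
          have h5 : G.dist (xs l) (ss l) + 1 = kk + 3 := hl.2.2.2.2.1
          have h6 : G.dist (xs (l+1)) (ss l) + 2 = kk + 3 := hl.2.2.2.2.2
          have i1 : G.dist (ss j) (xs l) + G.dist (xs l) (xs (l+1)) =
              G.dist (ss j) (xs (l+1)) := by omega
          have i2 : G.dist (xs l) (xs (l+1)) + G.dist (xs (l+1)) (ss l) =
              G.dist (xs l) (ss l) := by omega
          have := alpha1 hα i1 i2 hadj
          exact CH (ss j) (ss l) (by omega)
  -- injectivity of ss on Fin (card V + 1)
  have key : ∀ j l : ℕ, j < l → l < Fintype.card V + 1 → ss j ≠ ss l := by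
    intro j l hjl hlN heq
    have hp := prop l hlN j hjl
    have h5 : G.dist (xs l) (ss l) + 1 = kk + 3 := (hinv l hlN).2.2.2.2.1
    rw [heq] at hp
    have : G.dist (ss l) (xs l) = G.dist (xs l) (ss l) := by rw [G.dist_comm]
    omega
  have inj : Function.Injective (fun i : Fin (Fintype.card V + 1) => ss i.val) := by
    intro i i' hii
    simp only at hii
    rcases Nat.lt_trichotomy i.val i'.val with h | h | h
    · exact absurd hii (key i.val i'.val h i'.isLt)
    · exact Fin.ext h
    · exact absurd hii.symm (key i'.val i.val h i.isLt)
  have := Fintype.card_le_of_injective _ inj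
  simp [Fintype.card_fin] at this

end NoCH
theorem stmt_15 [Fintype V] [Nonempty V] (G : SimpleGraph V) (hG : G.Connected)
    (hα : AlphaI G 1) (v : V)
    (hloc1 : ∀ w : V, G.Adj v w → ecc G v ≤ ecc G w)
    (hloc2 : ∃ x : V, G.dist v x = 2 ∧ ecc G x < ecc G v) :
    ecc G v ≤ grad G + 2 ∧ (ecc G v = grad G + 2 → gdiam G = 2 * grad G) := by
  classical
  obtain ⟨x, hvx, hex⟩ := hloc2
  have hdist_le_ecc : ∀ w u : V, G.dist w u ≤ ecc G w :=
    fun w u => Finset.le_sup (f := fun u => G.dist w u) (Finset.mem_univ u)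
  have hecc_att : ∀ w : V, ∃ u, ecc G w = G.dist w u := by
    intro w
    obtain ⟨u, _, hu⟩ :=
      Finset.exists_mem_eq_sup Finset.univ Finset.univ_nonempty (fun u => G.dist w u)
    exact ⟨u, hu⟩
  have hk2 : 2 ≤ ecc G v := hvx ▸ hdist_le_ecc v x
  obtain ⟨c, _, hc⟩ := Finset.exists_mem_eq_inf' Finset.univ_nonempty (fun w => ecc G w)
  have hgradc : grad G = ecc G c := hc
  have hdc : ∀ a b : V, G.dist a b ≤ 2 * grad G := by
    intro a b
    have h1 : G.dist a b ≤ G.dist a c + G.dist c b := hG.dist_triangle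
    have h2 : G.dist a c = G.dist c a := G.dist_comm
    have h3 : G.dist c a ≤ ecc G c := hdist_le_ecc c a
    have h4 : G.dist c b ≤ ecc G c := hdist_le_ecc c b
    omega
  have hpair : ∃ a b : V, 2 * ecc G v ≤ G.dist a b + 4 := by
    rcases le_or_gt (ecc G v) 2 with hk_le | hk_gt
    · exact ⟨v, v, by omega⟩
    · by_contra hCH
      push_neg at hCH
      obtain ⟨kk, hkk⟩ : ∃ kk, ecc G v = kk + 3 := ⟨ecc G v - 3, by omega⟩
      refine noCH hG hα v x kk hvx ?_ ?_ ?_ ?_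
      · intro u
        have := hdist_le_ecc v u
        omega
      · intro w hw
        obtain ⟨s, hs⟩ := hecc_att w
        have := hloc1 w hw
        exact ⟨s, by omega⟩
      · intro s
        have h1 : G.dist x s ≤ ecc G x := hdist_le_ecc x s
        omega
      · intro a b h
        have := hCH a b
        omega
  obtain ⟨a, b, hab⟩ := hpair
  have h2r : G.dist a b ≤ 2 * grad G := hdc a b
  refine ⟨by omega, ?_⟩
  intro hek
  apply le_antisymm
  · obtain ⟨w, _, hw⟩ :=
      Finset.exists_mem_eq_sup Finset.univ Finset.univ_nonempty (fun w => ecc G w)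
    have hgd : gdiam G = ecc G w := hw
    obtain ⟨u, hu⟩ := hecc_att w
    have := hdc w u
    omega
  · have h1 : G.dist a b ≤ ecc G a := hdist_le_ecc a b
    have h2 : ecc G a ≤ gdiam G := Finset.le_sup (f := fun w => ecc G w) (Finset.mem_univ a)
    omega
end

section
/- Let K be a clique in an α_1-metric graph G. Every vertex v has a distance-two gate with respect to K: a vertex v* such that v* lies in the interval I(a,v) for every a ∈ proj(v,K), and d(v*,K) ≤ 2. -/
open SimpleGraph

variable {V : Type*}

/-- First step along a shortest path: if `dist x y = n+1`, there is a neighbor of `x`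
at distance `n` from `y`. -/
lemma exists_adj_dist (G : SimpleGraph V) (hG : G.Connected) {x y : V} {n : ℕ}
    (h : G.dist x y = n + 1) : ∃ t : V, G.Adj x t ∧ G.dist t y = n := by
  obtain ⟨p, hp⟩ := (hG x y).exists_walk_length_eq_dist
  cases p with
  | nil => rw [h] at hp; simp at hp
  | @cons _ c _ h' q =>
    refine ⟨c, h', ?_⟩
    have hq : q.length = n := by
      have : q.length + 1 = n + 1 := by simpa [h] using hp
      omega
    have h1 : G.dist c y ≤ n := hq ▸ SimpleGraph.dist_le q
    have h2 : G.dist x y ≤ G.dist x c + G.dist c y := hG.dist_triangle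
    have h3 : G.dist x c = 1 := SimpleGraph.dist_eq_one_iff_adj.mpr h'
    omega

theorem stmt_18 [Fintype V] (G : SimpleGraph V) (hG : G.Connected)
    (hα : AlphaI G 1) (K : Set V) (hK : G.IsClique K) (hKne : K.Nonempty) (v : V) :
    ∃ vstar : V,
      (∀ a ∈ K, (∀ b ∈ K, G.dist v a ≤ G.dist v b) → Itv G a v vstar) ∧
      (∃ a ∈ K, G.dist vstar a ≤ 2) := by
  classical
  obtain ⟨a₀, ha₀K, ha₀min⟩ :=
    Set.exists_min_image K (G.dist v) K.toFinite hKne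
  set k := G.dist v a₀ with hk
  -- the projection predicate
  set Pp : V → Prop := fun a => a ∈ K ∧ ∀ b ∈ K, G.dist v a ≤ G.dist v b with hPp
  have hPa₀ : Pp a₀ := ⟨ha₀K, ha₀min⟩
  have hPk : ∀ a, Pp a → G.dist v a = k :=
    fun a ha => le_antisymm (ha.2 a₀ ha₀K) (ha₀min a ha.1)
  rcases le_or_gt k 2 with hk2 | hk2
  · refine ⟨v, fun a ha hmin => ?_, ⟨a₀, ha₀K, ?_⟩⟩
    · simp [Itv, SimpleGraph.dist_self]
    · exact hk2
  · -- main case: k ≥ 3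
    set W : Finset V :=
      Finset.univ.filter (fun w => ∀ a, Pp a → G.dist v w + G.dist w a = k) with hW
    have hvW : v ∈ W := by
      simp only [hW, Finset.mem_filter, Finset.mem_univ, true_and]
      intro a ha
      rw [SimpleGraph.dist_self]
      simpa using hPk a ha
    obtain ⟨vs, hvsW, hvsmax⟩ := Finset.exists_max_image W (G.dist v) ⟨v, hvW⟩
    have hvs : ∀ a, Pp a → G.dist v vs + G.dist vs a = k := by
      simpa only [hW, Finset.mem_filter, Finset.mem_univ, true_and] using hvsW
    set m := G.dist vs a₀ with hm
    have hma : ∀ a, Pp a → G.dist vs a = m := by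
      intro a ha
      have h1 := hvs a ha
      have h2 := hvs a₀ hPa₀
      omega
    rcases le_or_gt m 2 with hm2 | hm2
    · refine ⟨vs, fun a ha hmin => ?_, ⟨a₀, ha₀K, hm2⟩⟩
      have h1 := hvs a ⟨ha, hmin⟩
      have h2 := hPk a ⟨ha, hmin⟩
      unfold Itv
      have c1 : G.dist a vs = G.dist vs a := SimpleGraph.dist_comm
      have c2 : G.dist vs v = G.dist v vs := SimpleGraph.dist_comm
      have c3 : G.dist a v = G.dist v a := SimpleGraph.dist_comm
      omega
    · -- m ≥ 3 : derive a contradiction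
      exfalso
      have hvvs : G.dist v vs + m = k := hvs a₀ hPa₀
      -- a first neighbor of vs towards a₀
      obtain ⟨s₀, hs₀adj, hs₀d⟩ := exists_adj_dist G hG (x := vs) (y := a₀)
        (show G.dist vs a₀ = (m - 1) + 1 by omega)
      set Nb : Finset V := Finset.univ.filter (G.Adj vs) with hNb
      set Sc : V → Finset V :=
        fun s => Finset.univ.filter (fun a => Pp a ∧ G.dist s a = m - 1) with hSc
      obtain ⟨s, hsNb, hsmax⟩ :=
        Finset.exists_max_image Nb (fun s => (Sc s).card) ⟨s₀, by simp [hNb, hs₀adj]⟩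
      have hsadj : G.Adj vs s := by simpa [hNb] using hsNb
      have hs₀card : 1 ≤ (Sc s₀).card := by
        refine Finset.card_pos.mpr ⟨a₀, ?_⟩
        simp only [hSc, Finset.mem_filter, Finset.mem_univ, true_and]
        exact ⟨hPa₀, hs₀d⟩
      have hscard : 1 ≤ (Sc s).card :=
        le_trans hs₀card (hsmax s₀ (by simp [hNb, hs₀adj]))
      obtain ⟨a₁, ha₁⟩ := Finset.card_pos.mp hscard
      have ha₁' : Pp a₁ ∧ G.dist s a₁ = m - 1 := by
        simpa [hSc] using ha₁
      -- distances to vs-neighbors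
      have hdist_s : G.dist v s = G.dist v vs + 1 := by
        have h1 : G.dist v s ≤ G.dist v vs + G.dist vs s := hG.dist_triangle
        have h2 : G.dist vs s = 1 := SimpleGraph.dist_eq_one_iff_adj.mpr hsadj
        have h3 : G.dist v a₁ ≤ G.dist v s + G.dist s a₁ := hG.dist_triangle
        have h4 := hPk a₁ ha₁'.1
        omega
      by_cases hall : ∀ a, Pp a → G.dist s a = m - 1
      · -- s would be a farther element of W
        have hsW : s ∈ W := by
          simp only [hW, Finset.mem_filter, Finset.mem_univ, true_and]
          intro a ha
          have := hall a ha
          omega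
        have := hvsmax s hsW
        omega
      · push_neg at hall
        obtain ⟨b, hPb, hb'⟩ := hall
        have ha₁b : a₁ ≠ b := fun h => hb' (h ▸ ha₁'.2)
        have hab1 : G.dist a₁ b = 1 :=
          SimpleGraph.dist_eq_one_iff_adj.mpr (hK ha₁'.1.1 hPb.1 ha₁b)
        have hvsb : G.dist vs b = m := hma b hPb
        have hsb : G.dist s b = m := by
          have h1 : G.dist s b ≤ G.dist s a₁ + G.dist a₁ b := hG.dist_triangle
          have h2 : G.dist vs b ≤ G.dist vs s + G.dist s b := hG.dist_triangle
          have h3 : G.dist vs s = 1 := SimpleGraph.dist_eq_one_iff_adj.mpr hsadj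
          have h4 := ha₁'.2
          omega
        obtain ⟨t, htadj, htb⟩ := exists_adj_dist G hG (x := vs) (y := b)
          (show G.dist vs b = (m - 1) + 1 by omega)
        have hts : G.dist t s ≤ 2 := by
          have h1 : G.dist t s ≤ G.dist t vs + G.dist vs s := hG.dist_triangle
          have h2 : G.dist t vs = 1 :=
            SimpleGraph.dist_eq_one_iff_adj.mpr htadj.symm
          have h3 : G.dist vs s = 1 := SimpleGraph.dist_eq_one_iff_adj.mpr hsadj
          omega
        -- every a ∈ Sc s is also in Sc t, and b ∈ Sc t
        have hkey : ∀ a, Pp a → G.dist s a = m - 1 → G.dist t a = m - 1 := by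
          intro a hPa hsa
          have hneb : a ≠ b := fun h => hb' (h ▸ hsa)
          have hadjab : G.Adj a b := hK hPa.1 hPb.1 hneb
          have hab : G.dist a b = 1 := SimpleGraph.dist_eq_one_iff_adj.mpr hadjab
          have h1 : G.dist t a ≤ G.dist t b + G.dist b a := hG.dist_triangle
          have h1' : G.dist b a = G.dist a b := SimpleGraph.dist_comm
          have h2 : G.dist vs a ≤ G.dist vs t + G.dist t a := hG.dist_triangle
          have h3 : G.dist vs t = 1 := SimpleGraph.dist_eq_one_iff_adj.mpr htadj
          have h4 : G.dist vs a = m := hma a hPa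
          by_contra hne
          have hta : G.dist t a = m := by omega
          have I1 : Itv G t a b := by
            unfold Itv
            omega
          have I2 : Itv G b s a := by
            unfold Itv
            have e1 : G.dist b s = G.dist s b := SimpleGraph.dist_comm
            have e2 : G.dist a s = G.dist s a := SimpleGraph.dist_comm
            omega
          have := hα t b a s I1 I2 hadjab.symm
          -- G.dist t b + G.dist b s ≤ G.dist t s + 1
          have e1 : G.dist b s = G.dist s b := SimpleGraph.dist_comm
          omega
        have hsub : Sc s ⊆ Sc t := by
          intro a ha
          have ha' : Pp a ∧ G.dist s a = m - 1 := by simpa [hSc] using ha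
          simp only [hSc, Finset.mem_filter, Finset.mem_univ, true_and]
          exact ⟨ha'.1, hkey a ha'.1 ha'.2⟩
        have hbt : b ∈ Sc t := by
          simp only [hSc, Finset.mem_filter, Finset.mem_univ, true_and]
          exact ⟨hPb, htb⟩
        have hbs : b ∉ Sc s := by
          simp only [hSc, Finset.mem_filter, Finset.mem_univ, true_and, not_and]
          intro _
          exact hb'
        have hlt : (Sc s).card < (Sc t).card :=
          Finset.card_lt_card ⟨hsub, fun h => hbs (h hbt)⟩
        have := hsmax t (by simp [hNb, htadj])
        omega
end
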